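/- arXiv:1208.6569 — 4 statements merged into one kernel-verified Lean document; each statement's English description precedes it below -/
import Mathlib

section
/- Let G and H be locally compact Hausdorff unimodular topological groups and π : G → H a continuous surjective open homomorphism with finite kernel. Let L be a discrete subgroup of G. If π(L) is a lattice in H, then L is a lattice in G. -/
open MeasureTheory
open scoped ENNReal NNReal

/-- The space of right cosets `Wg` of `W` in `G`. -/
abbrev RightQuotient {G : Type*} [Group G] (W : Subgroup G) : Type _ :=
  Quotient (QuotientGroup.rightRel W)

/-- Right translation action of `G` on the space of right cosets `W\G`. -/
def rightTranslate {G : Type*} [Group G] (W : Subgroup G) (g : G) :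
    RightQuotient W → RightQuotient W :=
  Quotient.map' (· * g) (fun a b h => by
    rw [QuotientGroup.rightRel_apply] at h ⊢
    simpa [mul_assoc] using h)

/-- `W` is a lattice in `G`: a discrete subgroup such that the right coset space `W\G`
carries a nonzero finite `G`-invariant Borel measure. -/
def IsLattice (G : Type*) [Group G] [TopologicalSpace G] (W : Subgroup G) : Prop :=
  DiscreteTopology W ∧
  ∃ ν : @Measure (RightQuotient W) (borel _),
    ν ≠ 0 ∧ ν Set.univ < ⊤ ∧
    ∀ (g : G) (E : Set (RightQuotient W)), MeasurableSet[borel _] E →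
      ν (rightTranslate W g ⁻¹' E) = ν E

section Aux

variable {G H : Type*} [Group G] [Group H]

/-- Counting function: for `E ⊆ L\G`, counts (as an `ℝ≥0∞`-valued sum over a finite set `Kf`,
intended to be the kernel of `π`) how many `k ∈ Kf` satisfy `L(gk) ∈ E`. -/
noncomputable def cFun (L : Subgroup G) (Kf : Finset G) (E : Set (RightQuotient L)) (g : G) :
    ℝ≥0∞ :=
  ∑ k ∈ Kf, E.indicator (fun _ => (1 : ℝ≥0∞)) (Quotient.mk'' (g * k))

lemma cFun_empty (L : Subgroup G) (Kf : Finset G) (g : G) : cFun L Kf (∅ : Set _) g = 0 := by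
  simp [cFun]

lemma cFun_univ (L : Subgroup G) (Kf : Finset G) (g : G) :
    cFun L Kf (Set.univ : Set _) g = (Kf.card : ℝ≥0∞) := by
  simp [cFun]

lemma cFun_le (L : Subgroup G) (Kf : Finset G) (E : Set (RightQuotient L)) (g : G) :
    cFun L Kf E g ≤ (Kf.card : ℝ≥0∞) := by
  calc cFun L Kf E g ≤ ∑ _k ∈ Kf, (1 : ℝ≥0∞) := by
        refine Finset.sum_le_sum fun k _ => ?_
        classical
        by_cases h : (Quotient.mk'' (g * k) : RightQuotient L) ∈ E <;>
          simp [Set.indicator_apply, h]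
    _ = (Kf.card : ℝ≥0∞) := by simp

lemma cFun_add_compl (L : Subgroup G) (Kf : Finset G) (E : Set (RightQuotient L)) (g : G) :
    cFun L Kf E g + cFun L Kf Eᶜ g = (Kf.card : ℝ≥0∞) := by
  classical
  rw [cFun, cFun, ← Finset.sum_add_distrib]
  have : ∀ k ∈ Kf,
      E.indicator (fun _ => (1 : ℝ≥0∞)) (Quotient.mk'' (g * k)) +
        Eᶜ.indicator (fun _ => (1 : ℝ≥0∞)) (Quotient.mk'' (g * k)) = 1 := by
    intro k _
    by_cases h : (Quotient.mk'' (g * k) : RightQuotient L) ∈ E <;>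
      simp [Set.indicator_apply, h]
  rw [Finset.sum_congr rfl this]
  simp

lemma cFun_iUnion (L : Subgroup G) (Kf : Finset G) (f : ℕ → Set (RightQuotient L))
    (hd : Pairwise (Function.onFun Disjoint f)) (g : G) :
    cFun L Kf (⋃ i, f i) g = ∑' i, cFun L Kf (f i) g := by
  classical
  have hpt : ∀ x : RightQuotient L,
      (⋃ i, f i).indicator (fun _ => (1 : ℝ≥0∞)) x
        = ∑' i, (f i).indicator (fun _ => (1 : ℝ≥0∞)) x := by
    intro x
    by_cases hx : x ∈ ⋃ i, f i
    · obtain ⟨i₀, hi₀⟩ := Set.mem_iUnion.1 hx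
      rw [Set.indicator_of_mem hx]
      rw [tsum_eq_single i₀ ?_, Set.indicator_of_mem hi₀]
      intro j hj
      refine Set.indicator_of_notMem (fun hxj => ?_) _
      exact Set.disjoint_left.mp (hd hj) hxj hi₀
    · rw [Set.indicator_of_notMem hx]
      have : ∀ i, (f i).indicator (fun _ => (1 : ℝ≥0∞)) x = 0 := fun i =>
        Set.indicator_of_notMem (fun h => hx (Set.mem_iUnion_of_mem i h)) _
      rw [tsum_congr this, tsum_zero]
  rw [cFun, Finset.sum_congr rfl (fun k _ => hpt _)]
  exact (Summable.tsum_finsetSum (fun _ _ => ENNReal.summable)).symm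

variable (π : G →* H)

lemma sum_shift {Kf : Finset G} (hK : ∀ k, k ∈ Kf ↔ k ∈ π.ker) (f : G → ℝ≥0∞) {w : G}
    (hw : w ∈ Kf) : ∑ k ∈ Kf, f (w * k) = ∑ k ∈ Kf, f k := by
  have mem : ∀ a, a ∈ Kf ↔ π a = 1 := fun a => (hK a).trans MonoidHom.mem_ker
  refine Finset.sum_nbij' (fun k => w * k) (fun k => w⁻¹ * k) ?_ ?_ ?_ ?_ ?_
  · intro a ha
    rw [mem, map_mul, (mem w).1 hw, (mem a).1 ha, one_mul]
  · intro a ha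
    rw [mem, map_mul, map_inv, (mem w).1 hw, inv_one, one_mul]
    exact (mem a).1 ha
  · intro a _; group
  · intro a _; group
  · intro a _; rfl

lemma sum_conj {Kf : Finset G} (hK : ∀ k, k ∈ Kf ↔ k ∈ π.ker) (f : G → ℝ≥0∞) (g : G) :
    ∑ k ∈ Kf, f (g⁻¹ * k * g) = ∑ k ∈ Kf, f k := by
  have mem : ∀ a, a ∈ Kf ↔ π a = 1 := fun a => (hK a).trans MonoidHom.mem_ker
  refine Finset.sum_nbij' (fun k => g⁻¹ * k * g) (fun k => g * k * g⁻¹) ?_ ?_ ?_ ?_ ?_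
  · intro a ha
    rw [mem, map_mul, map_mul, map_inv, (mem a).1 ha, mul_one, inv_mul_cancel]
  · intro a ha
    rw [mem, map_mul, map_mul, map_inv, (mem a).1 ha, mul_one, mul_inv_cancel]
  · intro a _; group
  · intro a _; group
  · intro a _; rfl

lemma cFun_mul_left_L {L : Subgroup G} (Kf : Finset G) (E : Set (RightQuotient L)) {l : G}
    (hl : l ∈ L) (g : G) : cFun L Kf E (l * g) = cFun L Kf E g := by
  refine Finset.sum_congr rfl fun k _ => ?_
  have : (Quotient.mk'' (l * g * k) : RightQuotient L) = Quotient.mk'' (g * k) := by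
    rw [Quotient.eq'', QuotientGroup.rightRel_apply]
    have : g * k * (l * g * k)⁻¹ = l⁻¹ := by group
    rw [this]
    exact inv_mem hl
  rw [this]

lemma cFun_mul_left_ker {L : Subgroup G} {Kf : Finset G} (hK : ∀ k, k ∈ Kf ↔ k ∈ π.ker)
    (E : Set (RightQuotient L)) {z : G} (hz : z ∈ Kf) (g : G) :
    cFun L Kf E (z * g) = cFun L Kf E g := by
  have mem : ∀ a, a ∈ Kf ↔ π a = 1 := fun a => (hK a).trans MonoidHom.mem_ker
  have hw : g⁻¹ * z * g ∈ Kf := by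
    rw [mem, map_mul, map_mul, map_inv, (mem z).1 hz, mul_one, inv_mul_cancel]
  have key : ∑ k ∈ Kf, E.indicator (fun _ => (1 : ℝ≥0∞)) (Quotient.mk'' (g * (g⁻¹ * z * g * k)))
      = ∑ k ∈ Kf, E.indicator (fun _ => (1 : ℝ≥0∞)) (Quotient.mk'' (g * k)) :=
    sum_shift π hK (fun x => E.indicator (fun _ => (1 : ℝ≥0∞)) (Quotient.mk'' (g * x))) hw
  simp only [cFun]
  rw [← key]
  refine Finset.sum_congr rfl fun k _ => ?_
  have hgk : z * g * k = g * (g⁻¹ * z * g * k) := by group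
  rw [hgk]

lemma cFun_descent {L : Subgroup G} {Kf : Finset G} (hK : ∀ k, k ∈ Kf ↔ k ∈ π.ker)
    (E : Set (RightQuotient L)) {a b : G}
    (hq : (Quotient.mk'' (π a) : RightQuotient (L.map π)) = Quotient.mk'' (π b)) :
    cFun L Kf E a = cFun L Kf E b := by
  have hr : π b * (π a)⁻¹ ∈ L.map π := by
    have := Quotient.eq''.1 hq
    rwa [QuotientGroup.rightRel_apply] at this
  obtain ⟨l, hl, hll⟩ := hr
  have hz : b * a⁻¹ * l⁻¹ ∈ Kf := by
    rw [hK, MonoidHom.mem_ker, map_mul, map_mul, map_inv, map_inv, hll]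
    group
  have hb : b = (b * a⁻¹ * l⁻¹) * (l * a) := by group
  rw [hb, ← mul_assoc, mul_assoc (b * a⁻¹ * l⁻¹) l a, cFun_mul_left_ker π hK E hz,
    cFun_mul_left_L Kf E hl]

lemma cFun_translate {L : Subgroup G} {Kf : Finset G} (hK : ∀ k, k ∈ Kf ↔ k ∈ π.ker)
    (E : Set (RightQuotient L)) (g g₀ : G) :
    cFun L Kf (rightTranslate L g ⁻¹' E) g₀ = cFun L Kf E (g₀ * g) := by
  have key : ∑ k ∈ Kf, E.indicator (fun _ => (1 : ℝ≥0∞)) (Quotient.mk'' (g₀ * g * (g⁻¹ * k * g)))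
      = ∑ k ∈ Kf, E.indicator (fun _ => (1 : ℝ≥0∞)) (Quotient.mk'' (g₀ * g * k)) :=
    sum_conj π hK (fun x => E.indicator (fun _ => (1 : ℝ≥0∞)) (Quotient.mk'' (g₀ * g * x))) g
  simp only [cFun]
  rw [← key]
  refine Finset.sum_congr rfl fun k _ => ?_
  have h2 : (rightTranslate L g ⁻¹' E).indicator (fun _ => (1 : ℝ≥0∞)) (Quotient.mk'' (g₀ * k))
      = E.indicator (fun _ => (1 : ℝ≥0∞)) (rightTranslate L g (Quotient.mk'' (g₀ * k))) := by
    by_cases h : rightTranslate L g (Quotient.mk'' (g₀ * k)) ∈ E <;>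
      simp [Set.indicator_apply, h, Set.mem_preimage]
  rw [h2]
  have h3 : rightTranslate L g (Quotient.mk'' (g₀ * k)) = Quotient.mk'' (g₀ * k * g) :=
    Quotient.map'_mk'' _ _ _
  rw [h3]
  have h4 : g₀ * k * g = g₀ * g * (g⁻¹ * k * g) := by group
  rw [h4]

lemma cFun_lsc [TopologicalSpace G] [ContinuousMul G] (L : Subgroup G) (Kf : Finset G)
    {E : Set (RightQuotient L)} (hE : IsOpen E) : LowerSemicontinuous (cFun L Kf E) := by
  refine lowerSemicontinuous_sum fun k _ => ?_
  exact LowerSemicontinuous.comp (hE.lowerSemicontinuous_indicator (zero_le_one))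
    (continuous_quotient_mk'.comp (continuous_mul_right k))

lemma isOpenMap_mkRight [TopologicalSpace H] [ContinuousMul H] (W : Subgroup H) :
    IsOpenMap (fun h : H => (Quotient.mk'' h : RightQuotient W)) := by
  intro U hU
  rw [← (isQuotientMap_quotient_mk' (s := QuotientGroup.rightRel W)).isOpen_preimage]
  have hmk : (@Quotient.mk' H (QuotientGroup.rightRel W)) = fun h => (Quotient.mk'' h : RightQuotient W) := rfl
  rw [hmk]
  have heq : ((fun h => Quotient.mk'' h) ⁻¹'
      ((fun h : H => (Quotient.mk'' h : RightQuotient W)) '' U))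
        = ⋃ w : W, (fun x => (w : H) * x) '' U := by
    ext h
    simp only [Set.mem_preimage, Set.mem_image, Set.mem_iUnion]
    constructor
    · rintro ⟨u, hu, he⟩
      have hr := Quotient.eq''.1 he
      rw [QuotientGroup.rightRel_apply] at hr
      refine ⟨⟨h * u⁻¹, hr⟩, u, hu, ?_⟩
      group
    · rintro ⟨w, u, hu, rfl⟩
      refine ⟨u, hu, ?_⟩
      rw [Quotient.eq'', QuotientGroup.rightRel_apply]
      have : (w : H) * u * u⁻¹ = (w : H) := by group
      rw [this]
      exact w.2
  rw [heq]
  exact isOpen_iUnion fun w => (Homeomorph.mulLeft (w : H)).isOpenMap U hU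

end Aux

/-- Let `G` and `H` be locally compact Hausdorff unimodular topological
groups and `π : G → H` a continuous surjective open homomorphism with finite kernel.
Let `L` be a discrete subgroup of `G`.  If `π(L)` is a lattice in `H`, then `L` is a
lattice in `G`. -/
theorem statement9 {G H : Type*}
    [Group G] [TopologicalSpace G] [IsTopologicalGroup G] [T2Space G] [LocallyCompactSpace G]
    [MeasurableSpace G] [BorelSpace G]
    (μG : Measure G) [μG.IsHaarMeasure] [μG.IsMulRightInvariant]
    [Group H] [TopologicalSpace H] [IsTopologicalGroup H] [T2Space H] [LocallyCompactSpace H]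
    [MeasurableSpace H] [BorelSpace H]
    (μH : Measure H) [μH.IsHaarMeasure] [μH.IsMulRightInvariant]
    (π : G →* H) (hcont : Continuous π) (hsurj : Function.Surjective π)
    (hopen : IsOpenMap π) (hker : (π.ker : Set G).Finite)
    (L : Subgroup G) (hLdisc : DiscreteTopology L)
    (hlat : IsLattice H (L.map π)) :
    IsLattice G L := by
  classical
  obtain ⟨-, ν, hν0, hνfin, hνinv⟩ := hlat
  refine ⟨hLdisc, ?_⟩
  letI mX : MeasurableSpace (RightQuotient L) := borel _
  haveI : BorelSpace (RightQuotient L) := ⟨rfl⟩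
  letI mY : MeasurableSpace (RightQuotient (L.map π)) := borel _
  haveI : BorelSpace (RightQuotient (L.map π)) := ⟨rfl⟩
  set Kf : Finset G := hker.toFinset with hKf
  have hK : ∀ k, k ∈ Kf ↔ k ∈ π.ker := fun k => by
    simp [hKf, Set.Finite.mem_toFinset]
  -- the projection `G → π(L)\H`
  set Φ : G → RightQuotient (L.map π) := fun g => Quotient.mk'' (π g) with hΦ
  have hΦsurj : Function.Surjective Φ := by
    intro y
    obtain ⟨h, rfl⟩ := Quotient.exists_rep y
    obtain ⟨g, rfl⟩ := hsurj h
    exact ⟨g, rfl⟩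
  -- descent of the counting function to `π(L)\H`
  set hE : Set (RightQuotient L) → RightQuotient (L.map π) → ℝ≥0∞ :=
    fun E y => cFun L Kf E (Function.surjInv hΦsurj y) with hhEdef
  have hhE : ∀ E (g : G), hE E (Φ g) = cFun L Kf E g := by
    intro E g
    exact cFun_descent π hK E (Function.surjInv_eq hΦsurj (Φ g))
  -- continuity of right translations on the quotients
  have hTcont : ∀ g : G, Continuous (rightTranslate L g) := fun g =>
    Continuous.quotient_map' (continuous_mul_right g) _
  have hT'cont : ∀ h : H, Continuous (rightTranslate (L.map π) h) := fun h =>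
    Continuous.quotient_map' (continuous_mul_right h) _
  have hΦopen : IsOpenMap Φ := (isOpenMap_mkRight (L.map π)).comp hopen
  -- measurability of the descended counting functions
  have hmeas : ∀ E : Set (RightQuotient L), MeasurableSet E → Measurable (hE E) := by
    intro E hEm
    refine MeasurableSpace.induction_on_inter (C := fun E _ => Measurable (hE E))
      (rfl : mX = MeasurableSpace.generateFrom {s | IsOpen s}) isPiSystem_isOpen
      ?_ ?_ ?_ ?_ E hEm
    · show Measurable (hE ∅)
      have : hE ∅ = fun _ => 0 := funext fun y => cFun_empty L Kf _
      rw [this]; exact measurable_const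
    · intro U hU
      show Measurable (hE U)
      have hlsc : LowerSemicontinuous (hE U) := by
        rw [lowerSemicontinuous_iff_isOpen_preimage]
        intro t
        have himg : hE U ⁻¹' Set.Ioi t = Φ '' (cFun L Kf U ⁻¹' Set.Ioi t) := by
          ext y
          constructor
          · intro hy
            obtain ⟨g, rfl⟩ := hΦsurj y
            rw [Set.mem_preimage, hhE] at hy
            exact ⟨g, hy, rfl⟩
          · rintro ⟨g, hg, rfl⟩
            rw [Set.mem_preimage, hhE]
            exact hg
        rw [himg]
        exact hΦopen _ ((cFun_lsc L Kf hU).isOpen_preimage t)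
      exact hlsc.measurable
    · intro E hEm hI
      show Measurable (hE Eᶜ)
      have hcompl : hE Eᶜ = fun y => (Kf.card : ℝ≥0∞) - hE E y := by
        funext y
        obtain ⟨g, rfl⟩ := hΦsurj y
        rw [hhE, hhE]
        refine ENNReal.eq_sub_of_add_eq ?_ ?_
        · exact lt_of_le_of_lt (cFun_le L Kf E g) (ENNReal.natCast_lt_top _) |>.ne
        · rw [add_comm]; exact cFun_add_compl L Kf E g
      rw [hcompl]
      exact measurable_const.sub hI
    · intro f hd hfm hI
      show Measurable (hE (⋃ i, f i))
      have hun : hE (⋃ i, f i) = fun y => ∑' i, hE (f i) y := by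
        funext y
        obtain ⟨g, rfl⟩ := hΦsurj y
        rw [hhE, cFun_iUnion L Kf f hd]
        exact tsum_congr fun i => (hhE _ _).symm
      rw [hun]
      exact Measurable.ennreal_tsum hI
  -- the measure on `L\G`
  have m0 : (∫⁻ y, hE ∅ y ∂ν) = 0 := by
    have : hE ∅ = fun _ => 0 := funext fun y => cFun_empty L Kf _
    rw [this]; simp
  have mU : ∀ ⦃f : ℕ → Set (RightQuotient L)⦄, (∀ i, MeasurableSet (f i)) →
      Pairwise (Function.onFun Disjoint f) →
      (∫⁻ y, hE (⋃ i, f i) y ∂ν) = ∑' i, ∫⁻ y, hE (f i) y ∂ν := by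
    intro f hfm hd
    have hun : hE (⋃ i, f i) = fun y => ∑' i, hE (f i) y := by
      funext y
      obtain ⟨g, rfl⟩ := hΦsurj y
      rw [hhE, cFun_iUnion L Kf f hd]
      exact tsum_congr fun i => (hhE _ _).symm
    rw [hun]
    exact lintegral_tsum fun i => (hmeas (f i) (hfm i)).aemeasurable
  refine ⟨Measure.ofMeasurable (fun E _ => ∫⁻ y, hE E y ∂ν) m0 mU, ?_, ?_, ?_⟩
  · -- nonzero
    have huniv : (Measure.ofMeasurable (fun E _ => ∫⁻ y, hE E y ∂ν) m0 mU) Set.univ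
        = (Kf.card : ℝ≥0∞) * ν Set.univ := by
      rw [Measure.ofMeasurable_apply _ MeasurableSet.univ]
      have : hE Set.univ = fun _ => (Kf.card : ℝ≥0∞) := funext fun y => cFun_univ L Kf _
      rw [this, lintegral_const]
    intro hzero
    have : (Measure.ofMeasurable (fun E _ => ∫⁻ y, hE E y ∂ν) m0 mU) Set.univ = 0 := by
      rw [hzero]; rfl
    rw [huniv] at this
    have hcard : (Kf.card : ℝ≥0∞) ≠ 0 := by
      have h1 : (1 : G) ∈ Kf := (hK 1).2 (one_mem _)
      exact Nat.cast_ne_zero.2 (Finset.card_ne_zero_of_mem h1)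
    have hν0' : ν Set.univ ≠ 0 := fun h => hν0 (Measure.measure_univ_eq_zero.1 h)
    exact (mul_ne_zero hcard hν0') this
  · -- finite
    rw [Measure.ofMeasurable_apply _ MeasurableSet.univ]
    have : hE Set.univ = fun _ => (Kf.card : ℝ≥0∞) := funext fun y => cFun_univ L Kf _
    rw [this, lintegral_const]
    exact ENNReal.mul_lt_top (ENNReal.natCast_lt_top _) hνfin
  · -- invariance
    intro g E hEm
    have hpre : MeasurableSet (rightTranslate L g ⁻¹' E) := (hTcont g).measurable hEm
    rw [Measure.ofMeasurable_apply _ hpre, Measure.ofMeasurable_apply _ hEm]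
    have hpt : ∀ y, hE (rightTranslate L g ⁻¹' E) y
        = hE E (rightTranslate (L.map π) (π g) y) := by
      intro y
      obtain ⟨g₀, rfl⟩ := hΦsurj y
      rw [hhE, cFun_translate π hK E g g₀]
      have hmk : rightTranslate (L.map π) (π g) (Φ g₀) = Φ (g₀ * g) := by
        show Quotient.map' _ _ (Quotient.mk'' (π g₀)) = _
        rw [Quotient.map'_mk'']
        simp [hΦ, map_mul]
      rw [hmk, hhE]
    have hT'meas : Measurable (rightTranslate (L.map π) (π g)) := (hT'cont (π g)).measurable
    have hmapeq : ν.map (rightTranslate (L.map π) (π g)) = ν := by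
      refine Measure.ext fun s hs => ?_
      rw [Measure.map_apply hT'meas hs]
      exact hνinv (π g) s hs
    calc (∫⁻ y, hE (rightTranslate L g ⁻¹' E) y ∂ν)
        = ∫⁻ y, hE E (rightTranslate (L.map π) (π g) y) ∂ν := lintegral_congr hpt
      _ = ∫⁻ y, hE E y ∂(ν.map (rightTranslate (L.map π) (π g))) :=
          (lintegral_map (hmeas E hEm) hT'meas).symm
      _ = ∫⁻ y, hE E y ∂ν := by rw [hmapeq]
end

section
/- Let G be a topological group and L ⊆ L' subgroups of G with L of finite index in L'. Then the connected component of the identity in the closure of L' (in G) equals the connected component of the identity in the closure of L; in particular, the closure of L has finite index in the closure of L'. -/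
open Set Pointwise

/-- Let `G` be a topological group and `L ⊆ L'` subgroups of `G` with
`L` of finite index in `L'`.  Then the connected component of the identity in the
closure of `L'` equals the connected component of the identity in the closure of `L`;
in particular, the closure of `L` has finite index in the closure of `L'`. -/
theorem statement10 {G : Type*} [Group G] [TopologicalSpace G] [IsTopologicalGroup G]
    (L L' : Subgroup G) (hLL' : L ≤ L') (hfin : L.relIndex L' ≠ 0) :
    connectedComponentIn (closure (L' : Set G)) 1
      = connectedComponentIn (closure (L : Set G)) 1 ∧
    L.topologicalClosure.relIndex L'.topologicalClosure ≠ 0 := by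
  set K : Subgroup G := L.topologicalClosure with hK
  have hKclosed : IsClosed (K : Set G) := L.isClosed_topologicalClosure
  -- H : the closure of L, seen inside L'
  set H : Subgroup L' := K.subgroupOf L' with hH
  have hle : L.subgroupOf L' ≤ H := by
    intro x hx
    exact Subgroup.le_topologicalClosure L hx
  have hHindex : H.index ≠ 0 := by
    have hdvd : H.index ∣ (L.subgroupOf L').index := Subgroup.index_dvd_of_le hle
    intro h0
    rw [h0] at hdvd
    exact hfin (Nat.eq_zero_of_zero_dvd hdvd)
  haveI : H.FiniteIndex := ⟨hHindex⟩
  haveI : Finite (L' ⧸ H) := H.finite_quotient_of_finiteIndex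
  -- the covering of `closure L'` by finitely many cosets of K
  set U : Set G := ⋃ q : L' ⧸ H, ((Quotient.out q : L') : G) • (K : Set G) with hU
  have hUclosed : IsClosed U :=
    isClosed_iUnion_of_finite fun q => hKclosed.smul _
  have hL'U : (L' : Set G) ⊆ U := by
    intro x hx
    refine mem_iUnion.2 ⟨QuotientGroup.mk (⟨x, hx⟩ : L'), ?_⟩
    set s : L' := Quotient.out (QuotientGroup.mk (⟨x, hx⟩ : L') : L' ⧸ H) with hs
    have hmk : (QuotientGroup.mk s : L' ⧸ H) = QuotientGroup.mk (⟨x, hx⟩ : L') :=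
      QuotientGroup.out_eq' _
    have hmem : s⁻¹ * ⟨x, hx⟩ ∈ H := QuotientGroup.eq.mp hmk
    rw [hH, Subgroup.mem_subgroupOf] at hmem
    refine ⟨((s⁻¹ * ⟨x, hx⟩ : L') : G), hmem, ?_⟩
    push_cast
    simp [smul_eq_mul, mul_inv_cancel_left]
  have hclU : closure (L' : Set G) ⊆ U := closure_minimal hL'U hUclosed
  -- main component claim: connectedComponentIn (closure L') 1 ⊆ K
  have h1K : (1 : G) ∈ (K : Set G) := K.one_mem
  have h1L' : (1 : G) ∈ closure (L' : Set G) := subset_closure L'.one_mem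
  set C : Set G := connectedComponentIn (closure (L' : Set G)) 1 with hC
  have hCK : C ⊆ (K : Set G) := by
    -- V : union of the cosets distinct from K
    set V : Set G := ⋃ q : {q : L' ⧸ H // ((Quotient.out q : L') : G) ∉ K},
        ((Quotient.out q.1 : L') : G) • (K : Set G) with hV
    have hVclosed : IsClosed V := isClosed_iUnion_of_finite fun q => hKclosed.smul _
    have hKVdisj : ∀ x, x ∈ (K : Set G) → x ∉ V := by
      intro x hxK hxV
      obtain ⟨q, y, hyK, hxy⟩ := by
        simpa only [hV, mem_iUnion, mem_smul_set] using hxV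
      apply q.2
      have : ((Quotient.out q.1 : L') : G) = x * y⁻¹ := by
        rw [← hxy, smul_eq_mul, mul_inv_cancel_right]
      rw [this]
      exact K.mul_mem hxK (K.inv_mem hyK)
    have hCov : C ⊆ (K : Set G) ∪ V := by
      intro x hx
      have hxU : x ∈ U := hclU (connectedComponentIn_subset _ _ hx)
      obtain ⟨q, y, hyK, hxy⟩ := by
        simpa only [hU, mem_iUnion, mem_smul_set] using hxU
      by_cases hqK : ((Quotient.out q : L') : G) ∈ K
      · left
        rw [← hxy, smul_eq_mul]
        exact K.mul_mem hqK hyK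
      · right
        exact mem_iUnion.2 ⟨⟨q, hqK⟩, mem_smul_set.2 ⟨y, hyK, hxy⟩⟩
    have hpre : IsPreconnected C := isPreconnected_connectedComponentIn
    by_contra hnot
    obtain ⟨z, hzC, hzK⟩ := not_subset.1 hnot
    have hsub : C ⊆ Vᶜ ∪ Kᶜ := by
      intro x hx
      by_cases hxK : x ∈ (K : Set G)
      · exact Or.inl (hKVdisj x hxK)
      · exact Or.inr hxK
    have h1C : (1 : G) ∈ C := mem_connectedComponentIn h1L'
    have hne := hpre Vᶜ (Kᶜ : Set G) hVclosed.isOpen_compl hKclosed.isOpen_compl hsub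
      ⟨1, h1C, hKVdisj 1 h1K⟩ ⟨z, hzC, hzK⟩
    obtain ⟨w, hwC, hwV, hwK⟩ := hne
    rcases hCov hwC with h | h
    · exact hwK h
    · exact hwV h
  -- first conjunct
  have hcompEq : connectedComponentIn (closure (L' : Set G)) 1
      = connectedComponentIn (closure (L : Set G)) 1 := by
    apply le_antisymm
    · have : C ⊆ closure (L : Set G) := hCK
      exact isPreconnected_connectedComponentIn.subset_connectedComponentIn
        (mem_connectedComponentIn h1L') this
    · exact connectedComponentIn_mono 1 (closure_mono (SetLike.coe_subset_coe.2 hLL'))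
  refine ⟨hcompEq, ?_⟩
  -- finite index of closures
  rw [Subgroup.relIndex]
  haveI : Finite (L'.topologicalClosure ⧸ K.subgroupOf L'.topologicalClosure) := by
    have hsurj : Function.Surjective
        (fun q : L' ⧸ H =>
          (QuotientGroup.mk ⟨((Quotient.out q : L') : G),
            Subgroup.le_topologicalClosure L' (Quotient.out q : L').2⟩ :
            L'.topologicalClosure ⧸ K.subgroupOf L'.topologicalClosure)) := by
      intro c
      obtain ⟨x, rfl⟩ := QuotientGroup.mk_surjective c
      have hxU : (x : G) ∈ U := hclU x.2
      obtain ⟨q, y, hyK, hxy⟩ := by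
        simpa only [hU, mem_iUnion, mem_smul_set] using hxU
      refine ⟨q, QuotientGroup.eq.2 ?_⟩
      rw [Subgroup.mem_subgroupOf]
      have : (((Quotient.out q : L') : G))⁻¹ * (x : G) = y := by
        rw [← hxy, smul_eq_mul, inv_mul_cancel_left]
      simpa [this] using hyK
    exact Finite.of_surjective _ hsurj
  exact Subgroup.index_ne_zero_of_finite
end

section
/- Let B be the 3×3 integer symmetric matrix [[1,−1,0],[−1,1,−1],[0,−1,1]], and let O(B)(ℤ) = {g ∈ GL(3,ℤ) : gᵀ B g = B}. Then the subgroup of O(B)(ℤ) generated by the three matrices ρ(s₁) = [[−1,2,0],[0,1,0],[0,0,1]], ρ(s₂) = [[1,0,0],[2,−1,2],[0,0,1]], ρ(s₃) = [[1,0,0],[0,1,0],[0,2,−1]] has finite index in O(B)(ℤ). -/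
open Matrix

/-- The Tits form matrix `B` of the right-angled Coxeter group with
`m₁₂ = m₂₃ = ∞`, `m₁₃ = 2`. -/
def Bmat : Matrix (Fin 3) (Fin 3) ℤ := !![1, -1, 0; -1, 1, -1; 0, -1, 1]

/-- The group `O(B)(ℤ) = {g ∈ GL(3, ℤ) : gᵀ B g = B}` as a subgroup of `GL(3, ℤ)`. -/
def OBZ : Subgroup (GL (Fin 3) ℤ) where
  carrier := {g | ((g : Matrix (Fin 3) (Fin 3) ℤ))ᵀ * Bmat * (g : Matrix (Fin 3) (Fin 3) ℤ)
    = Bmat}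
  one_mem' := by simp
  mul_mem' := by
    intro a b ha hb
    simp only [Set.mem_setOf_eq, Units.val_mul, transpose_mul] at *
    calc (b : Matrix (Fin 3) (Fin 3) ℤ)ᵀ * (a : Matrix (Fin 3) (Fin 3) ℤ)ᵀ * Bmat *
          ((a : Matrix (Fin 3) (Fin 3) ℤ) * (b : Matrix (Fin 3) (Fin 3) ℤ))
        = (b : Matrix (Fin 3) (Fin 3) ℤ)ᵀ *
          ((a : Matrix (Fin 3) (Fin 3) ℤ)ᵀ * Bmat * (a : Matrix (Fin 3) (Fin 3) ℤ)) *
          (b : Matrix (Fin 3) (Fin 3) ℤ) := by noncomm_ring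
      _ = Bmat := by rw [ha, hb]
  inv_mem' := by
    intro a ha
    simp only [Set.mem_setOf_eq] at *
    calc ((a⁻¹ : GL (Fin 3) ℤ) : Matrix (Fin 3) (Fin 3) ℤ)ᵀ * Bmat *
          ((a⁻¹ : GL (Fin 3) ℤ) : Matrix (Fin 3) (Fin 3) ℤ)
        = ((a⁻¹ : GL (Fin 3) ℤ) : Matrix (Fin 3) (Fin 3) ℤ)ᵀ *
          ((a : Matrix (Fin 3) (Fin 3) ℤ)ᵀ * Bmat * (a : Matrix (Fin 3) (Fin 3) ℤ)) *
          ((a⁻¹ : GL (Fin 3) ℤ) : Matrix (Fin 3) (Fin 3) ℤ) := by rw [ha]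
      _ = ((a : Matrix (Fin 3) (Fin 3) ℤ) *
            ((a⁻¹ : GL (Fin 3) ℤ) : Matrix (Fin 3) (Fin 3) ℤ))ᵀ * Bmat *
          ((a : Matrix (Fin 3) (Fin 3) ℤ) *
            ((a⁻¹ : GL (Fin 3) ℤ) : Matrix (Fin 3) (Fin 3) ℤ)) := by
        rw [transpose_mul]; noncomm_ring
      _ = Bmat := by rw [← Units.val_mul, mul_inv_cancel]; simp

/-- The image `ρ(s₁)` of the first generator, as an element of `GL(3, ℤ)`. -/
def rho1 : GL (Fin 3) ℤ :=
  ⟨!![-1, 2, 0; 0, 1, 0; 0, 0, 1], !![-1, 2, 0; 0, 1, 0; 0, 0, 1], by decide, by decide⟩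

/-- The image `ρ(s₂)` of the second generator, as an element of `GL(3, ℤ)`. -/
def rho2 : GL (Fin 3) ℤ :=
  ⟨!![1, 0, 0; 2, -1, 2; 0, 0, 1], !![1, 0, 0; 2, -1, 2; 0, 0, 1], by decide, by decide⟩

/-- The image `ρ(s₃)` of the third generator, as an element of `GL(3, ℤ)`. -/
def rho3 : GL (Fin 3) ℤ :=
  ⟨!![1, 0, 0; 0, 1, 0; 0, 2, -1], !![1, 0, 0; 0, 1, 0; 0, 2, -1], by decide, by decide⟩

/-! ### Auxiliary definitions -/

def tsig : GL (Fin 3) ℤ :=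
  ⟨!![0, 0, 1; 0, 1, 0; 1, 0, 0], !![0, 0, 1; 0, 1, 0; 1, 0, 0], by decide, by decide⟩
def ttau : GL (Fin 3) ℤ :=
  ⟨!![1, -2, 0; 0, -1, 0; 0, -2, 1], !![1, -2, 0; 0, -1, 0; 0, -2, 1], by decide, by decide⟩

abbrev Hgrp : Subgroup (GL (Fin 3) ℤ) := Subgroup.closure {rho1, rho2, rho3}
def Tset : Set (GL (Fin 3) ℤ) := {1, tsig, ttau, tsig * ttau}

lemma mem_OBZ_iff {g : GL (Fin 3) ℤ} :
    g ∈ OBZ ↔ ((g : Matrix (Fin 3) (Fin 3) ℤ))ᵀ * Bmat * (g : Matrix (Fin 3) (Fin 3) ℤ) = Bmat :=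
  Iff.rfl

lemma rho1_memO : rho1 ∈ OBZ := by rw [mem_OBZ_iff]; decide
lemma rho2_memO : rho2 ∈ OBZ := by rw [mem_OBZ_iff]; decide
lemma rho3_memO : rho3 ∈ OBZ := by rw [mem_OBZ_iff]; decide
lemma tsig_memO : tsig ∈ OBZ := by rw [mem_OBZ_iff]; decide
lemma ttau_memO : ttau ∈ OBZ := by rw [mem_OBZ_iff]; decide

lemma rho1_memH : rho1 ∈ Hgrp := Subgroup.subset_closure (by simp)
lemma rho2_memH : rho2 ∈ Hgrp := Subgroup.subset_closure (by simp)
lemma rho3_memH : rho3 ∈ Hgrp := Subgroup.subset_closure (by simp)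

/-! ### The vector `c = g · (1,1,1)` and its transformation -/

def cvec (g : GL (Fin 3) ℤ) : Fin 3 → ℤ := (g : Matrix (Fin 3) (Fin 3) ℤ) *ᵥ ![1, 1, 1]

lemma cvec_mul (g h : GL (Fin 3) ℤ) :
    cvec (g * h) = (g : Matrix (Fin 3) (Fin 3) ℤ) *ᵥ cvec h := by
  simp [cvec, Units.val_mul, ← mulVec_mulVec]

lemma cvec_rho1 (g : GL (Fin 3) ℤ) :
    cvec (rho1 * g) = ![-(cvec g 0) + 2 * cvec g 1, cvec g 1, cvec g 2] := by
  rw [cvec_mul]; funext i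
  fin_cases i <;> simp [rho1, Matrix.mulVec, dotProduct, Fin.sum_univ_three]

lemma cvec_rho2 (g : GL (Fin 3) ℤ) :
    cvec (rho2 * g) = ![cvec g 0, 2 * cvec g 0 - cvec g 1 + 2 * cvec g 2, cvec g 2] := by
  rw [cvec_mul]; funext i
  fin_cases i <;> simp [rho2, Matrix.mulVec, dotProduct, Fin.sum_univ_three] <;> ring

lemma cvec_rho3 (g : GL (Fin 3) ℤ) :
    cvec (rho3 * g) = ![cvec g 0, cvec g 1, 2 * cvec g 1 - cvec g 2] := by
  rw [cvec_mul]; funext i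
  fin_cases i <;> simp [rho3, Matrix.mulVec, dotProduct, Fin.sum_univ_three] <;> ring

lemma invariant {g : GL (Fin 3) ℤ} (hg : g ∈ OBZ) :
    (cvec g 1) ^ 2 = (cvec g 0 - cvec g 1) ^ 2 + (cvec g 2 - cvec g 1) ^ 2 + 1 := by
  rw [mem_OBZ_iff] at hg
  have key : ![(1:ℤ), 1, 1] ⬝ᵥ
      (((g : Matrix (Fin 3) (Fin 3) ℤ)ᵀ * Bmat * (g : Matrix (Fin 3) (Fin 3) ℤ)) *ᵥ ![1,1,1]) =
      ![(1:ℤ), 1, 1] ⬝ᵥ (Bmat *ᵥ ![1,1,1]) := by rw [hg]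
  simp only [Matrix.mulVec, dotProduct, Matrix.mul_apply, Matrix.transpose_apply,
    Fin.sum_univ_three, Bmat, Matrix.of_apply, Matrix.cons_val', Matrix.cons_val_zero,
    Matrix.cons_val_one, Matrix.head_cons, Matrix.empty_val', Matrix.cons_val_fin_one,
    Matrix.head_fin_const, Matrix.cons_val_two, Matrix.tail_cons] at key
  simp only [cvec, Matrix.mulVec, dotProduct, Fin.sum_univ_three, Matrix.cons_val_zero,
    Matrix.cons_val_one, Matrix.head_cons, Matrix.cons_val_two, Matrix.tail_cons]
  linear_combination (-1 : ℤ) * key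

/-! ### Arithmetic lemmas -/

lemma one_le_sq {x : ℤ} (h : x ≠ 0) : 1 ≤ x ^ 2 := by
  rcases h.lt_or_gt with h | h <;> nlinarith

lemma no_consec_sq {v w : ℤ} (h : v ^ 2 = w ^ 2 + 1) (h2 : 2 ≤ v.natAbs) : False := by
  have h3 : (v - w) * (v + w) = 1 := by linear_combination h
  rcases Int.mul_eq_one_iff_eq_one_or_neg_one.mp h3 with ⟨h4, h5⟩ | ⟨h4, h5⟩ <;> omega

lemma natAbs_lt_of_sq_lt {x y : ℤ} (h : x ^ 2 < y ^ 2) : x.natAbs < y.natAbs := by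
  by_contra h'
  push_neg at h'
  have h1 : |y| ≤ |x| := by
    rw [Int.abs_eq_natAbs, Int.abs_eq_natAbs]; exact_mod_cast h'
  have := pow_le_pow_left₀ (abs_nonneg y) h1 2
  simp only [sq_abs] at this
  linarith

lemma descent_pos (U V W : ℤ) (hinv : V ^ 2 = U ^ 2 + W ^ 2 + 1) (h1 : U * V ≤ 0)
    (h2 : W * V ≤ 0) (hU : U ≠ 0) (hW : W ≠ 0) (hV : 2 ≤ V) :
    (2 * U + 3 * V + 2 * W) ^ 2 < V ^ 2 := by
  have hU' : U < 0 := by rcases hU.lt_or_gt with h | h; exacts [h, by nlinarith]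
  have hW' : W < 0 := by rcases hW.lt_or_gt with h | h; exacts [h, by nlinarith]
  have hUW : 1 ≤ U * W := by nlinarith
  have low : -V < 2 * U + 3 * V + 2 * W := by
    by_contra hc
    push_neg at hc
    have hle : U + W + 2 * V ≤ 0 := by linarith
    nlinarith [sq_nonneg (U - W), mul_nonneg (neg_nonneg.mpr hle) (by linarith : (0:ℤ) ≤ V)]
  have high : 2 * U + 3 * V + 2 * W < V := by
    by_contra hc
    push_neg at hc
    have hle : 0 ≤ U + W + V := by linarith
    nlinarith [mul_nonneg hle (by linarith : (0:ℤ) ≤ V)]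
  nlinarith [low, high]

lemma descent (U V W : ℤ) (hinv : V ^ 2 = U ^ 2 + W ^ 2 + 1) (h1 : U * V ≤ 0)
    (h2 : W * V ≤ 0) (hU : U ≠ 0) (hW : W ≠ 0) (hV : 2 ≤ V.natAbs) :
    (2 * U + 3 * V + 2 * W) ^ 2 < V ^ 2 := by
  rcases (by omega : 2 ≤ V ∨ V ≤ -2) with h | h
  · exact descent_pos U V W hinv h1 h2 hU hW h
  · have := descent_pos (-U) (-V) (-W) (by linarith [hinv]) (by nlinarith) (by nlinarith)
      (by simpa using hU) (by simpa using hW) (by linarith)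
    nlinarith [this]

lemma sq1 {x y : ℤ} (h : x ^ 2 + y ^ 2 = 1) :
    (x = 0 ∧ y = 1) ∨ (x = 0 ∧ y = -1) ∨ (x = 1 ∧ y = 0) ∨ (x = -1 ∧ y = 0) := by
  have hx1 : -1 ≤ x := by nlinarith [sq_nonneg y]
  have hx2 : x ≤ 1 := by nlinarith [sq_nonneg y]
  have hy1 : -1 ≤ y := by nlinarith [sq_nonneg x]
  have hy2 : y ≤ 1 := by nlinarith [sq_nonneg x]
  interval_cases x <;> interval_cases y <;> simp_all

lemma leaf_helper {g h t : GL (Fin 3) ℤ} (hh : h ∈ Hgrp) (ht : t ∈ Tset)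
    (he : (g : Matrix (Fin 3) (Fin 3) ℤ) =
      (h : Matrix (Fin 3) (Fin 3) ℤ) * (t : Matrix (Fin 3) (Fin 3) ℤ)) :
    ∃ h' ∈ Hgrp, ∃ t' ∈ Tset, g = h' * t' :=
  ⟨h, hh, t, ht, Units.ext (by rw [Units.val_mul]; exact he)⟩

lemma base_case (g : GL (Fin 3) ℤ) (hg : g ∈ OBZ)
    (hv : cvec g 1 = 1 ∨ cvec g 1 = -1)
    (h0 : cvec g 0 = cvec g 1) (h2c : cvec g 2 = cvec g 1) :
    ∃ h ∈ Hgrp, ∃ t ∈ Tset, g = h * t := by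
  have hH1 : (1 : GL (Fin 3) ℤ) ∈ Hgrp := one_mem _
  have hHr1 : rho1 ∈ Hgrp := rho1_memH
  have hHr3 : rho3 ∈ Hgrp := rho3_memH
  have hH13 : rho1 * rho3 ∈ Hgrp := mul_mem rho1_memH rho3_memH
  have hT1 : (1 : GL (Fin 3) ℤ) ∈ Tset := Or.inl rfl
  have hTs : tsig ∈ Tset := by right; left; rfl
  have hTt : ttau ∈ Tset := by right; right; left; rfl
  have hTst : tsig * ttau ∈ Tset := by right; right; right; rfl
  rw [mem_OBZ_iff] at hg
  have E := fun i j => congrFun (congrFun hg i) j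
  have E00 := E 0 0
  have E01 := E 0 1
  have E02 := E 0 2
  have E10 := E 1 0
  have E11 := E 1 1
  have E12 := E 1 2
  have E20 := E 2 0
  have E21 := E 2 1
  have E22 := E 2 2
  simp only [Matrix.mul_apply, Matrix.transpose_apply, Fin.sum_univ_three, Bmat,
    Matrix.of_apply, Matrix.cons_val', Matrix.cons_val_zero, Matrix.cons_val_one,
    Matrix.head_cons, Matrix.empty_val', Matrix.cons_val_fin_one, Matrix.head_fin_const,
    Matrix.cons_val_two, Matrix.tail_cons] at E00 E01 E02 E10 E11 E12 E20 E21 E22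
  rcases hv with hd | hd
  ·
    have hr0 : (g : Matrix (Fin 3) (Fin 3) ℤ) 0 0 + (g : Matrix (Fin 3) (Fin 3) ℤ) 0 1 + (g : Matrix (Fin 3) (Fin 3) ℤ) 0 2 = 1 := by
      have h' := h0.trans hd
      simpa [cvec, Matrix.mulVec, dotProduct, Fin.sum_univ_three] using h'
    have hr1 : (g : Matrix (Fin 3) (Fin 3) ℤ) 1 0 + (g : Matrix (Fin 3) (Fin 3) ℤ) 1 1 + (g : Matrix (Fin 3) (Fin 3) ℤ) 1 2 = 1 := by
      simpa [cvec, Matrix.mulVec, dotProduct, Fin.sum_univ_three] using hd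
    have hr2 : (g : Matrix (Fin 3) (Fin 3) ℤ) 2 0 + (g : Matrix (Fin 3) (Fin 3) ℤ) 2 1 + (g : Matrix (Fin 3) (Fin 3) ℤ) 2 2 = 1 := by
      have h' := h2c.trans hd
      simpa [cvec, Matrix.mulVec, dotProduct, Fin.sum_univ_three] using h'
    have ha10 : (g : Matrix (Fin 3) (Fin 3) ℤ) 1 0 = 0 := by
      linear_combination ((1 : ℤ)) * ((-1 : ℤ) * E00 - E10 - E20 + ((g : Matrix (Fin 3) (Fin 3) ℤ) 0 0 - (g : Matrix (Fin 3) (Fin 3) ℤ) 1 0) * hr0 + (-(g : Matrix (Fin 3) (Fin 3) ℤ) 0 0 + (g : Matrix (Fin 3) (Fin 3) ℤ) 1 0 - (g : Matrix (Fin 3) (Fin 3) ℤ) 2 0) * hr1 + ((g : Matrix (Fin 3) (Fin 3) ℤ) 2 0 - (g : Matrix (Fin 3) (Fin 3) ℤ) 1 0) * hr2)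
    have ha11 : (g : Matrix (Fin 3) (Fin 3) ℤ) 1 1 = 1 := by
      linear_combination ((1 : ℤ)) * ((-1 : ℤ) * E01 - E11 - E21 + ((g : Matrix (Fin 3) (Fin 3) ℤ) 0 1 - (g : Matrix (Fin 3) (Fin 3) ℤ) 1 1) * hr0 + (-(g : Matrix (Fin 3) (Fin 3) ℤ) 0 1 + (g : Matrix (Fin 3) (Fin 3) ℤ) 1 1 - (g : Matrix (Fin 3) (Fin 3) ℤ) 2 1) * hr1 + ((g : Matrix (Fin 3) (Fin 3) ℤ) 2 1 - (g : Matrix (Fin 3) (Fin 3) ℤ) 1 1) * hr2)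
    have ha12 : (g : Matrix (Fin 3) (Fin 3) ℤ) 1 2 = 0 := by
      linear_combination ((1 : ℤ)) * ((-1 : ℤ) * E02 - E12 - E22 + ((g : Matrix (Fin 3) (Fin 3) ℤ) 0 2 - (g : Matrix (Fin 3) (Fin 3) ℤ) 1 2) * hr0 + (-(g : Matrix (Fin 3) (Fin 3) ℤ) 0 2 + (g : Matrix (Fin 3) (Fin 3) ℤ) 1 2 - (g : Matrix (Fin 3) (Fin 3) ℤ) 2 2) * hr1 + ((g : Matrix (Fin 3) (Fin 3) ℤ) 2 2 - (g : Matrix (Fin 3) (Fin 3) ℤ) 1 2) * hr2)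
    have q00 : (g : Matrix (Fin 3) (Fin 3) ℤ) 0 0 ^ 2 + (g : Matrix (Fin 3) (Fin 3) ℤ) 2 0 ^ 2 = 1 := by
      linear_combination E00 + (2 * (g : Matrix (Fin 3) (Fin 3) ℤ) 0 0 + 2 * (g : Matrix (Fin 3) (Fin 3) ℤ) 2 0 - (g : Matrix (Fin 3) (Fin 3) ℤ) 1 0) * ha10
    have q22 : (g : Matrix (Fin 3) (Fin 3) ℤ) 0 2 ^ 2 + (g : Matrix (Fin 3) (Fin 3) ℤ) 2 2 ^ 2 = 1 := by
      linear_combination E22 + (2 * (g : Matrix (Fin 3) (Fin 3) ℤ) 0 2 + 2 * (g : Matrix (Fin 3) (Fin 3) ℤ) 2 2 - (g : Matrix (Fin 3) (Fin 3) ℤ) 1 2) * ha12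
    have q02 : (g : Matrix (Fin 3) (Fin 3) ℤ) 0 0 * (g : Matrix (Fin 3) (Fin 3) ℤ) 0 2 + (g : Matrix (Fin 3) (Fin 3) ℤ) 2 0 * (g : Matrix (Fin 3) (Fin 3) ℤ) 2 2 = 0 := by
      linear_combination E02 + ((g : Matrix (Fin 3) (Fin 3) ℤ) 0 0 + (g : Matrix (Fin 3) (Fin 3) ℤ) 2 0 - (g : Matrix (Fin 3) (Fin 3) ℤ) 1 0) * ha12 + ((g : Matrix (Fin 3) (Fin 3) ℤ) 0 2 + (g : Matrix (Fin 3) (Fin 3) ℤ) 2 2) * ha10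
    rcases sq1 q00 with ⟨hx, hy⟩ | ⟨hx, hy⟩ | ⟨hx, hy⟩ | ⟨hx, hy⟩ <;>
      rcases sq1 q22 with ⟨hz, hw⟩ | ⟨hz, hw⟩ | ⟨hz, hw⟩ | ⟨hz, hw⟩
    · exfalso; rw [hx, hy, hz, hw] at q02; norm_num at q02
    · exfalso; rw [hx, hy, hz, hw] at q02; norm_num at q02
    · refine leaf_helper hH1 hTs ?_
      rw [show (((1 : GL (Fin 3) ℤ) : GL (Fin 3) ℤ) : Matrix (Fin 3) (Fin 3) ℤ) * ((tsig : GL (Fin 3) ℤ) : Matrix (Fin 3) (Fin 3) ℤ) = !![0, 0, 1; 0, 1, 0; 1, 0, 0] by decide]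
      ext i j
      fin_cases i <;> fin_cases j <;>
        simp only [Fin.zero_eta, Fin.mk_one, Fin.reduceFinMk, Matrix.of_apply, Matrix.cons_val',
        Matrix.cons_val_zero, Matrix.cons_val_one, Matrix.head_cons, Matrix.cons_val_two,
        Matrix.tail_cons, Matrix.empty_val', Matrix.cons_val_fin_one, Matrix.head_fin_const] <;>
        omega
    · refine leaf_helper hHr1 hTs ?_
      rw [show ((rho1 : GL (Fin 3) ℤ) : Matrix (Fin 3) (Fin 3) ℤ) * ((tsig : GL (Fin 3) ℤ) : Matrix (Fin 3) (Fin 3) ℤ) = !![0, 2, -1; 0, 1, 0; 1, 0, 0] by decide]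
      ext i j
      fin_cases i <;> fin_cases j <;>
        simp only [Fin.zero_eta, Fin.mk_one, Fin.reduceFinMk, Matrix.of_apply, Matrix.cons_val',
        Matrix.cons_val_zero, Matrix.cons_val_one, Matrix.head_cons, Matrix.cons_val_two,
        Matrix.tail_cons, Matrix.empty_val', Matrix.cons_val_fin_one, Matrix.head_fin_const] <;>
        omega
    · exfalso; rw [hx, hy, hz, hw] at q02; norm_num at q02
    · exfalso; rw [hx, hy, hz, hw] at q02; norm_num at q02
    · refine leaf_helper hHr3 hTs ?_
      rw [show ((rho3 : GL (Fin 3) ℤ) : Matrix (Fin 3) (Fin 3) ℤ) * ((tsig : GL (Fin 3) ℤ) : Matrix (Fin 3) (Fin 3) ℤ) = !![0, 0, 1; 0, 1, 0; -1, 2, 0] by decide]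
      ext i j
      fin_cases i <;> fin_cases j <;>
        simp only [Fin.zero_eta, Fin.mk_one, Fin.reduceFinMk, Matrix.of_apply, Matrix.cons_val',
        Matrix.cons_val_zero, Matrix.cons_val_one, Matrix.head_cons, Matrix.cons_val_two,
        Matrix.tail_cons, Matrix.empty_val', Matrix.cons_val_fin_one, Matrix.head_fin_const] <;>
        omega
    · refine leaf_helper hH13 hTs ?_
      rw [show (((rho1 * rho3) : GL (Fin 3) ℤ) : Matrix (Fin 3) (Fin 3) ℤ) * ((tsig : GL (Fin 3) ℤ) : Matrix (Fin 3) (Fin 3) ℤ) = !![0, 2, -1; 0, 1, 0; -1, 2, 0] by decide]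
      ext i j
      fin_cases i <;> fin_cases j <;>
        simp only [Fin.zero_eta, Fin.mk_one, Fin.reduceFinMk, Matrix.of_apply, Matrix.cons_val',
        Matrix.cons_val_zero, Matrix.cons_val_one, Matrix.head_cons, Matrix.cons_val_two,
        Matrix.tail_cons, Matrix.empty_val', Matrix.cons_val_fin_one, Matrix.head_fin_const] <;>
        omega
    · refine leaf_helper hH1 hT1 ?_
      rw [show (((1 : GL (Fin 3) ℤ) : GL (Fin 3) ℤ) : Matrix (Fin 3) (Fin 3) ℤ) * (((1 : GL (Fin 3) ℤ) : GL (Fin 3) ℤ) : Matrix (Fin 3) (Fin 3) ℤ) = !![1, 0, 0; 0, 1, 0; 0, 0, 1] by decide]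
      ext i j
      fin_cases i <;> fin_cases j <;>
        simp only [Fin.zero_eta, Fin.mk_one, Fin.reduceFinMk, Matrix.of_apply, Matrix.cons_val',
        Matrix.cons_val_zero, Matrix.cons_val_one, Matrix.head_cons, Matrix.cons_val_two,
        Matrix.tail_cons, Matrix.empty_val', Matrix.cons_val_fin_one, Matrix.head_fin_const] <;>
        omega
    · refine leaf_helper hHr3 hT1 ?_
      rw [show ((rho3 : GL (Fin 3) ℤ) : Matrix (Fin 3) (Fin 3) ℤ) * (((1 : GL (Fin 3) ℤ) : GL (Fin 3) ℤ) : Matrix (Fin 3) (Fin 3) ℤ) = !![1, 0, 0; 0, 1, 0; 0, 2, -1] by decide]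
      ext i j
      fin_cases i <;> fin_cases j <;>
        simp only [Fin.zero_eta, Fin.mk_one, Fin.reduceFinMk, Matrix.of_apply, Matrix.cons_val',
        Matrix.cons_val_zero, Matrix.cons_val_one, Matrix.head_cons, Matrix.cons_val_two,
        Matrix.tail_cons, Matrix.empty_val', Matrix.cons_val_fin_one, Matrix.head_fin_const] <;>
        omega
    · exfalso; rw [hx, hy, hz, hw] at q02; norm_num at q02
    · exfalso; rw [hx, hy, hz, hw] at q02; norm_num at q02
    · refine leaf_helper hHr1 hT1 ?_
      rw [show ((rho1 : GL (Fin 3) ℤ) : Matrix (Fin 3) (Fin 3) ℤ) * (((1 : GL (Fin 3) ℤ) : GL (Fin 3) ℤ) : Matrix (Fin 3) (Fin 3) ℤ) = !![-1, 2, 0; 0, 1, 0; 0, 0, 1] by decide]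
      ext i j
      fin_cases i <;> fin_cases j <;>
        simp only [Fin.zero_eta, Fin.mk_one, Fin.reduceFinMk, Matrix.of_apply, Matrix.cons_val',
        Matrix.cons_val_zero, Matrix.cons_val_one, Matrix.head_cons, Matrix.cons_val_two,
        Matrix.tail_cons, Matrix.empty_val', Matrix.cons_val_fin_one, Matrix.head_fin_const] <;>
        omega
    · refine leaf_helper hH13 hT1 ?_
      rw [show (((rho1 * rho3) : GL (Fin 3) ℤ) : Matrix (Fin 3) (Fin 3) ℤ) * (((1 : GL (Fin 3) ℤ) : GL (Fin 3) ℤ) : Matrix (Fin 3) (Fin 3) ℤ) = !![-1, 2, 0; 0, 1, 0; 0, 2, -1] by decide]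
      ext i j
      fin_cases i <;> fin_cases j <;>
        simp only [Fin.zero_eta, Fin.mk_one, Fin.reduceFinMk, Matrix.of_apply, Matrix.cons_val',
        Matrix.cons_val_zero, Matrix.cons_val_one, Matrix.head_cons, Matrix.cons_val_two,
        Matrix.tail_cons, Matrix.empty_val', Matrix.cons_val_fin_one, Matrix.head_fin_const] <;>
        omega
    · exfalso; rw [hx, hy, hz, hw] at q02; norm_num at q02
    · exfalso; rw [hx, hy, hz, hw] at q02; norm_num at q02
  ·
    have hr0 : (g : Matrix (Fin 3) (Fin 3) ℤ) 0 0 + (g : Matrix (Fin 3) (Fin 3) ℤ) 0 1 + (g : Matrix (Fin 3) (Fin 3) ℤ) 0 2 = -1 := by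
      have h' := h0.trans hd
      simpa [cvec, Matrix.mulVec, dotProduct, Fin.sum_univ_three] using h'
    have hr1 : (g : Matrix (Fin 3) (Fin 3) ℤ) 1 0 + (g : Matrix (Fin 3) (Fin 3) ℤ) 1 1 + (g : Matrix (Fin 3) (Fin 3) ℤ) 1 2 = -1 := by
      simpa [cvec, Matrix.mulVec, dotProduct, Fin.sum_univ_three] using hd
    have hr2 : (g : Matrix (Fin 3) (Fin 3) ℤ) 2 0 + (g : Matrix (Fin 3) (Fin 3) ℤ) 2 1 + (g : Matrix (Fin 3) (Fin 3) ℤ) 2 2 = -1 := by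
      have h' := h2c.trans hd
      simpa [cvec, Matrix.mulVec, dotProduct, Fin.sum_univ_three] using h'
    have ha10 : (g : Matrix (Fin 3) (Fin 3) ℤ) 1 0 = 0 := by
      linear_combination ((-1 : ℤ)) * ((-1 : ℤ) * E00 - E10 - E20 + ((g : Matrix (Fin 3) (Fin 3) ℤ) 0 0 - (g : Matrix (Fin 3) (Fin 3) ℤ) 1 0) * hr0 + (-(g : Matrix (Fin 3) (Fin 3) ℤ) 0 0 + (g : Matrix (Fin 3) (Fin 3) ℤ) 1 0 - (g : Matrix (Fin 3) (Fin 3) ℤ) 2 0) * hr1 + ((g : Matrix (Fin 3) (Fin 3) ℤ) 2 0 - (g : Matrix (Fin 3) (Fin 3) ℤ) 1 0) * hr2)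
    have ha11 : (g : Matrix (Fin 3) (Fin 3) ℤ) 1 1 = -1 := by
      linear_combination ((-1 : ℤ)) * ((-1 : ℤ) * E01 - E11 - E21 + ((g : Matrix (Fin 3) (Fin 3) ℤ) 0 1 - (g : Matrix (Fin 3) (Fin 3) ℤ) 1 1) * hr0 + (-(g : Matrix (Fin 3) (Fin 3) ℤ) 0 1 + (g : Matrix (Fin 3) (Fin 3) ℤ) 1 1 - (g : Matrix (Fin 3) (Fin 3) ℤ) 2 1) * hr1 + ((g : Matrix (Fin 3) (Fin 3) ℤ) 2 1 - (g : Matrix (Fin 3) (Fin 3) ℤ) 1 1) * hr2)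
    have ha12 : (g : Matrix (Fin 3) (Fin 3) ℤ) 1 2 = 0 := by
      linear_combination ((-1 : ℤ)) * ((-1 : ℤ) * E02 - E12 - E22 + ((g : Matrix (Fin 3) (Fin 3) ℤ) 0 2 - (g : Matrix (Fin 3) (Fin 3) ℤ) 1 2) * hr0 + (-(g : Matrix (Fin 3) (Fin 3) ℤ) 0 2 + (g : Matrix (Fin 3) (Fin 3) ℤ) 1 2 - (g : Matrix (Fin 3) (Fin 3) ℤ) 2 2) * hr1 + ((g : Matrix (Fin 3) (Fin 3) ℤ) 2 2 - (g : Matrix (Fin 3) (Fin 3) ℤ) 1 2) * hr2)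
    have q00 : (g : Matrix (Fin 3) (Fin 3) ℤ) 0 0 ^ 2 + (g : Matrix (Fin 3) (Fin 3) ℤ) 2 0 ^ 2 = 1 := by
      linear_combination E00 + (2 * (g : Matrix (Fin 3) (Fin 3) ℤ) 0 0 + 2 * (g : Matrix (Fin 3) (Fin 3) ℤ) 2 0 - (g : Matrix (Fin 3) (Fin 3) ℤ) 1 0) * ha10
    have q22 : (g : Matrix (Fin 3) (Fin 3) ℤ) 0 2 ^ 2 + (g : Matrix (Fin 3) (Fin 3) ℤ) 2 2 ^ 2 = 1 := by
      linear_combination E22 + (2 * (g : Matrix (Fin 3) (Fin 3) ℤ) 0 2 + 2 * (g : Matrix (Fin 3) (Fin 3) ℤ) 2 2 - (g : Matrix (Fin 3) (Fin 3) ℤ) 1 2) * ha12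
    have q02 : (g : Matrix (Fin 3) (Fin 3) ℤ) 0 0 * (g : Matrix (Fin 3) (Fin 3) ℤ) 0 2 + (g : Matrix (Fin 3) (Fin 3) ℤ) 2 0 * (g : Matrix (Fin 3) (Fin 3) ℤ) 2 2 = 0 := by
      linear_combination E02 + ((g : Matrix (Fin 3) (Fin 3) ℤ) 0 0 + (g : Matrix (Fin 3) (Fin 3) ℤ) 2 0 - (g : Matrix (Fin 3) (Fin 3) ℤ) 1 0) * ha12 + ((g : Matrix (Fin 3) (Fin 3) ℤ) 0 2 + (g : Matrix (Fin 3) (Fin 3) ℤ) 2 2) * ha10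
    rcases sq1 q00 with ⟨hx, hy⟩ | ⟨hx, hy⟩ | ⟨hx, hy⟩ | ⟨hx, hy⟩ <;>
      rcases sq1 q22 with ⟨hz, hw⟩ | ⟨hz, hw⟩ | ⟨hz, hw⟩ | ⟨hz, hw⟩
    · exfalso; rw [hx, hy, hz, hw] at q02; norm_num at q02
    · exfalso; rw [hx, hy, hz, hw] at q02; norm_num at q02
    · refine leaf_helper hH1 hTst ?_
      rw [show (((1 : GL (Fin 3) ℤ) : GL (Fin 3) ℤ) : Matrix (Fin 3) (Fin 3) ℤ) * (((tsig * ttau) : GL (Fin 3) ℤ) : Matrix (Fin 3) (Fin 3) ℤ) = !![0, -2, 1; 0, -1, 0; 1, -2, 0] by decide]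
      ext i j
      fin_cases i <;> fin_cases j <;>
        simp only [Fin.zero_eta, Fin.mk_one, Fin.reduceFinMk, Matrix.of_apply, Matrix.cons_val',
        Matrix.cons_val_zero, Matrix.cons_val_one, Matrix.head_cons, Matrix.cons_val_two,
        Matrix.tail_cons, Matrix.empty_val', Matrix.cons_val_fin_one, Matrix.head_fin_const] <;>
        omega
    · refine leaf_helper hHr1 hTst ?_
      rw [show ((rho1 : GL (Fin 3) ℤ) : Matrix (Fin 3) (Fin 3) ℤ) * (((tsig * ttau) : GL (Fin 3) ℤ) : Matrix (Fin 3) (Fin 3) ℤ) = !![0, 0, -1; 0, -1, 0; 1, -2, 0] by decide]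
      ext i j
      fin_cases i <;> fin_cases j <;>
        simp only [Fin.zero_eta, Fin.mk_one, Fin.reduceFinMk, Matrix.of_apply, Matrix.cons_val',
        Matrix.cons_val_zero, Matrix.cons_val_one, Matrix.head_cons, Matrix.cons_val_two,
        Matrix.tail_cons, Matrix.empty_val', Matrix.cons_val_fin_one, Matrix.head_fin_const] <;>
        omega
    · exfalso; rw [hx, hy, hz, hw] at q02; norm_num at q02
    · exfalso; rw [hx, hy, hz, hw] at q02; norm_num at q02
    · refine leaf_helper hHr3 hTst ?_
      rw [show ((rho3 : GL (Fin 3) ℤ) : Matrix (Fin 3) (Fin 3) ℤ) * (((tsig * ttau) : GL (Fin 3) ℤ) : Matrix (Fin 3) (Fin 3) ℤ) = !![0, -2, 1; 0, -1, 0; -1, 0, 0] by decide]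
      ext i j
      fin_cases i <;> fin_cases j <;>
        simp only [Fin.zero_eta, Fin.mk_one, Fin.reduceFinMk, Matrix.of_apply, Matrix.cons_val',
        Matrix.cons_val_zero, Matrix.cons_val_one, Matrix.head_cons, Matrix.cons_val_two,
        Matrix.tail_cons, Matrix.empty_val', Matrix.cons_val_fin_one, Matrix.head_fin_const] <;>
        omega
    · refine leaf_helper hH13 hTst ?_
      rw [show (((rho1 * rho3) : GL (Fin 3) ℤ) : Matrix (Fin 3) (Fin 3) ℤ) * (((tsig * ttau) : GL (Fin 3) ℤ) : Matrix (Fin 3) (Fin 3) ℤ) = !![0, 0, -1; 0, -1, 0; -1, 0, 0] by decide]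
      ext i j
      fin_cases i <;> fin_cases j <;>
        simp only [Fin.zero_eta, Fin.mk_one, Fin.reduceFinMk, Matrix.of_apply, Matrix.cons_val',
        Matrix.cons_val_zero, Matrix.cons_val_one, Matrix.head_cons, Matrix.cons_val_two,
        Matrix.tail_cons, Matrix.empty_val', Matrix.cons_val_fin_one, Matrix.head_fin_const] <;>
        omega
    · refine leaf_helper hH1 hTt ?_
      rw [show (((1 : GL (Fin 3) ℤ) : GL (Fin 3) ℤ) : Matrix (Fin 3) (Fin 3) ℤ) * ((ttau : GL (Fin 3) ℤ) : Matrix (Fin 3) (Fin 3) ℤ) = !![1, -2, 0; 0, -1, 0; 0, -2, 1] by decide]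
      ext i j
      fin_cases i <;> fin_cases j <;>
        simp only [Fin.zero_eta, Fin.mk_one, Fin.reduceFinMk, Matrix.of_apply, Matrix.cons_val',
        Matrix.cons_val_zero, Matrix.cons_val_one, Matrix.head_cons, Matrix.cons_val_two,
        Matrix.tail_cons, Matrix.empty_val', Matrix.cons_val_fin_one, Matrix.head_fin_const] <;>
        omega
    · refine leaf_helper hHr3 hTt ?_
      rw [show ((rho3 : GL (Fin 3) ℤ) : Matrix (Fin 3) (Fin 3) ℤ) * ((ttau : GL (Fin 3) ℤ) : Matrix (Fin 3) (Fin 3) ℤ) = !![1, -2, 0; 0, -1, 0; 0, 0, -1] by decide]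
      ext i j
      fin_cases i <;> fin_cases j <;>
        simp only [Fin.zero_eta, Fin.mk_one, Fin.reduceFinMk, Matrix.of_apply, Matrix.cons_val',
        Matrix.cons_val_zero, Matrix.cons_val_one, Matrix.head_cons, Matrix.cons_val_two,
        Matrix.tail_cons, Matrix.empty_val', Matrix.cons_val_fin_one, Matrix.head_fin_const] <;>
        omega
    · exfalso; rw [hx, hy, hz, hw] at q02; norm_num at q02
    · exfalso; rw [hx, hy, hz, hw] at q02; norm_num at q02
    · refine leaf_helper hHr1 hTt ?_
      rw [show ((rho1 : GL (Fin 3) ℤ) : Matrix (Fin 3) (Fin 3) ℤ) * ((ttau : GL (Fin 3) ℤ) : Matrix (Fin 3) (Fin 3) ℤ) = !![-1, 0, 0; 0, -1, 0; 0, -2, 1] by decide]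
      ext i j
      fin_cases i <;> fin_cases j <;>
        simp only [Fin.zero_eta, Fin.mk_one, Fin.reduceFinMk, Matrix.of_apply, Matrix.cons_val',
        Matrix.cons_val_zero, Matrix.cons_val_one, Matrix.head_cons, Matrix.cons_val_two,
        Matrix.tail_cons, Matrix.empty_val', Matrix.cons_val_fin_one, Matrix.head_fin_const] <;>
        omega
    · refine leaf_helper hH13 hTt ?_
      rw [show (((rho1 * rho3) : GL (Fin 3) ℤ) : Matrix (Fin 3) (Fin 3) ℤ) * ((ttau : GL (Fin 3) ℤ) : Matrix (Fin 3) (Fin 3) ℤ) = !![-1, 0, 0; 0, -1, 0; 0, 0, -1] by decide]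
      ext i j
      fin_cases i <;> fin_cases j <;>
        simp only [Fin.zero_eta, Fin.mk_one, Fin.reduceFinMk, Matrix.of_apply, Matrix.cons_val',
        Matrix.cons_val_zero, Matrix.cons_val_one, Matrix.head_cons, Matrix.cons_val_two,
        Matrix.tail_cons, Matrix.empty_val', Matrix.cons_val_fin_one, Matrix.head_fin_const] <;>
        omega
    · exfalso; rw [hx, hy, hz, hw] at q02; norm_num at q02
    · exfalso; rw [hx, hy, hz, hw] at q02; norm_num at q02

/-! ### Sign-flipping steps -/

lemma flip1 (g : GL (Fin 3) ℤ) :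
    ∃ s, s ∈ Hgrp ∧ s ∈ OBZ ∧
      (cvec (s * g) 0 - cvec (s * g) 1) * cvec (s * g) 1 ≤ 0 ∧
      (cvec (s * g) 0 - cvec (s * g) 1) ^ 2 = (cvec g 0 - cvec g 1) ^ 2 ∧
      cvec (s * g) 1 = cvec g 1 ∧
      cvec (s * g) 2 - cvec (s * g) 1 = cvec g 2 - cvec g 1 := by
  rcases le_or_gt ((cvec g 0 - cvec g 1) * cvec g 1) 0 with h | h
  · exact ⟨1, one_mem _, one_mem _, by simpa using h, by simp, by simp, by simp⟩
  · refine ⟨rho1, rho1_memH, rho1_memO, ?_, ?_, ?_, ?_⟩ <;> rw [cvec_rho1] <;> simp <;> nlinarith [h]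

lemma flip3 (g : GL (Fin 3) ℤ) :
    ∃ s, s ∈ Hgrp ∧ s ∈ OBZ ∧
      (cvec (s * g) 2 - cvec (s * g) 1) * cvec (s * g) 1 ≤ 0 ∧
      (cvec (s * g) 2 - cvec (s * g) 1) ^ 2 = (cvec g 2 - cvec g 1) ^ 2 ∧
      cvec (s * g) 1 = cvec g 1 ∧
      cvec (s * g) 0 - cvec (s * g) 1 = cvec g 0 - cvec g 1 := by
  rcases le_or_gt ((cvec g 2 - cvec g 1) * cvec g 1) 0 with h | h
  · exact ⟨1, one_mem _, one_mem _, by simpa using h, by simp, by simp, by simp⟩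
  · refine ⟨rho3, rho3_memH, rho3_memO, ?_, ?_, ?_, ?_⟩ <;> rw [cvec_rho3] <;> simp <;> nlinarith [h]

/-! ### The covering lemma -/

lemma cover_aux : ∀ n : ℕ, ∀ g : GL (Fin 3) ℤ, g ∈ OBZ → (cvec g 1).natAbs = n →
    ∃ h ∈ Hgrp, ∃ t ∈ Tset, g = h * t := by
  intro n
  induction n using Nat.strong_induction_on with
  | _ n ih =>
    intro g hg hn
    have hinv := invariant hg
    by_cases hb : (cvec g 1).natAbs ≤ 1
    · -- base case
      have h0 : cvec g 1 ≠ 0 := by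
        intro h
        rw [h] at hinv
        nlinarith [sq_nonneg (cvec g 0 - 0), sq_nonneg (cvec g 2 - 0)]
      have hv : cvec g 1 = 1 ∨ cvec g 1 = -1 := by omega
      have h1 : (cvec g 1) ^ 2 = 1 := by rcases hv with h | h <;> rw [h] <;> norm_num
      have hu : cvec g 0 = cvec g 1 := by
        have h2 : (cvec g 0 - cvec g 1) ^ 2 = 0 := by
          nlinarith [sq_nonneg (cvec g 0 - cvec g 1), sq_nonneg (cvec g 2 - cvec g 1)]
        have := sq_eq_zero_iff.mp h2
        linarith
      have hw : cvec g 2 = cvec g 1 := by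
        have h2 : (cvec g 2 - cvec g 1) ^ 2 = 0 := by
          nlinarith [sq_nonneg (cvec g 0 - cvec g 1), sq_nonneg (cvec g 2 - cvec g 1)]
        have := sq_eq_zero_iff.mp h2
        linarith
      exact base_case g hg hv hu hw
    · -- descent step
      push_neg at hb
      obtain ⟨s1, hs1H, hs1O, hu1le, hu1sq, hv1, hw1⟩ := flip1 g
      obtain ⟨s3, hs3H, hs3O, hw2le, hw2sq, hv2, hu2⟩ := flip3 (s1 * g)
      have hg1 : s1 * g ∈ OBZ := mul_mem hs1O hg
      have hg2 : s3 * (s1 * g) ∈ OBZ := mul_mem hs3O hg1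
      have hg3 : rho2 * (s3 * (s1 * g)) ∈ OBZ := mul_mem rho2_memO hg2
      have hv2g : cvec (s3 * (s1 * g)) 1 = cvec g 1 := by rw [hv2, hv1]
      have hinv2 := invariant hg2
      have hu2ne : cvec (s3 * (s1 * g)) 0 - cvec (s3 * (s1 * g)) 1 ≠ 0 := by
        intro h
        rw [h] at hinv2
        refine no_consec_sq (v := cvec (s3 * (s1 * g)) 1)
          (w := cvec (s3 * (s1 * g)) 2 - cvec (s3 * (s1 * g)) 1) (by linarith) ?_
        rw [hv2g]; omega
      have hw2ne : cvec (s3 * (s1 * g)) 2 - cvec (s3 * (s1 * g)) 1 ≠ 0 := by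
        intro h
        rw [h] at hinv2
        refine no_consec_sq (v := cvec (s3 * (s1 * g)) 1)
          (w := cvec (s3 * (s1 * g)) 0 - cvec (s3 * (s1 * g)) 1) (by linarith) ?_
        rw [hv2g]; omega
      have hu2le : (cvec (s3 * (s1 * g)) 0 - cvec (s3 * (s1 * g)) 1) *
          cvec (s3 * (s1 * g)) 1 ≤ 0 := by
        rw [hu2, hv2]; exact hu1le
      have hv3 : cvec (rho2 * (s3 * (s1 * g))) 1 =
          2 * (cvec (s3 * (s1 * g)) 0 - cvec (s3 * (s1 * g)) 1) +
          3 * cvec (s3 * (s1 * g)) 1 +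
          2 * (cvec (s3 * (s1 * g)) 2 - cvec (s3 * (s1 * g)) 1) := by
        rw [cvec_rho2]; simp; ring
      have hdec : (cvec (rho2 * (s3 * (s1 * g))) 1) ^ 2 < (cvec (s3 * (s1 * g)) 1) ^ 2 := by
        rw [hv3]
        exact descent _ _ _ hinv2 hu2le hw2le hu2ne hw2ne (by rw [hv2g]; omega)
      have hlt : (cvec (rho2 * (s3 * (s1 * g))) 1).natAbs < n := by
        have := natAbs_lt_of_sq_lt hdec
        rw [hv2g, hn] at this
        exact this
      obtain ⟨h, hh, t, ht, heq⟩ := ih _ hlt (rho2 * (s3 * (s1 * g))) hg3 rfl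
      refine ⟨s1⁻¹ * (s3⁻¹ * (rho2⁻¹ * h)), ?_, t, ht, ?_⟩
      · exact mul_mem (inv_mem hs1H) (mul_mem (inv_mem hs3H) (mul_mem (inv_mem rho2_memH) hh))
      · calc g = s1⁻¹ * (s3⁻¹ * (rho2⁻¹ * (rho2 * (s3 * (s1 * g))))) := by group
          _ = s1⁻¹ * (s3⁻¹ * (rho2⁻¹ * (h * t))) := by rw [heq]
          _ = s1⁻¹ * (s3⁻¹ * (rho2⁻¹ * h)) * t := by group

lemma cover (g : GL (Fin 3) ℤ) (hg : g ∈ OBZ) : ∃ h ∈ Hgrp, ∃ t ∈ Tset, g = h * t :=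
  cover_aux _ g hg rfl

/-! ### Main theorem -/


/-- The subgroup of `O(B)(ℤ)` generated by `ρ(s₁), ρ(s₂), ρ(s₃)` has
finite index in `O(B)(ℤ)`. -/
theorem statement12 :
    Subgroup.closure {rho1, rho2, rho3} ≤ OBZ ∧
    (Subgroup.closure {rho1, rho2, rho3}).relIndex OBZ ≠ 0 := by
  have hle : Subgroup.closure {rho1, rho2, rho3} ≤ OBZ := by
    rw [Subgroup.closure_le]
    rintro x hx
    simp only [Set.mem_insert_iff, Set.mem_singleton_iff] at hx
    rcases hx with rfl | rfl | rfl
    exacts [rho1_memO, rho2_memO, rho3_memO]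
  refine ⟨hle, ?_⟩
  have key : ∀ (t : GL (Fin 3) ℤ) (htO : t ∈ OBZ) (x : ↥OBZ),
      t * (x : GL (Fin 3) ℤ) ∈ Hgrp →
      QuotientGroup.mk (s := Hgrp.subgroupOf OBZ) (⟨t⁻¹, OBZ.inv_mem htO⟩ : ↥OBZ)
        = QuotientGroup.mk x := by
    intro t htO x hmem
    rw [QuotientGroup.eq, Subgroup.mem_subgroupOf]
    simpa using hmem
  haveI : Finite (↥OBZ ⧸ Hgrp.subgroupOf OBZ) := by
    apply Finite.of_surjective (fun i : Fin 4 =>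
      ![QuotientGroup.mk (s := Hgrp.subgroupOf OBZ)
          (⟨(1 : GL (Fin 3) ℤ)⁻¹, OBZ.inv_mem (one_mem _)⟩ : ↥OBZ),
        QuotientGroup.mk ⟨tsig⁻¹, OBZ.inv_mem tsig_memO⟩,
        QuotientGroup.mk ⟨ttau⁻¹, OBZ.inv_mem ttau_memO⟩,
        QuotientGroup.mk ⟨(tsig * ttau)⁻¹, OBZ.inv_mem (mul_mem tsig_memO ttau_memO)⟩] i)
    intro q
    refine QuotientGroup.induction_on q fun x => ?_
    obtain ⟨h, hh, t, ht, heq⟩ := cover ((x : GL (Fin 3) ℤ))⁻¹ (OBZ.inv_mem x.2)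
    have hxt : t * (x : GL (Fin 3) ℤ) = h⁻¹ := by
      have h2 : ((x : GL (Fin 3) ℤ))⁻¹⁻¹ = (h * t)⁻¹ := by rw [heq]
      rw [inv_inv] at h2
      rw [h2]; group
    have hmem : t * (x : GL (Fin 3) ℤ) ∈ Hgrp := by rw [hxt]; exact inv_mem hh
    simp only [Tset, Set.mem_insert_iff, Set.mem_singleton_iff] at ht
    rcases ht with rfl | rfl | rfl | rfl
    · exact ⟨0, by simpa using key _ (one_mem _) x hmem⟩
    · exact ⟨1, by simpa using key _ tsig_memO x hmem⟩
    · exact ⟨2, by simpa using key _ ttau_memO x hmem⟩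
    · exact ⟨3, by simpa using key _ (mul_mem tsig_memO ttau_memO) x hmem⟩
  exact Subgroup.index_ne_zero_of_finite
end

section
/- In the group PSL(2,ℤ) = SL(2,ℤ)/{±I}, the subgroup generated by the images of the matrices [[1,2],[0,1]] and [[1,0],[2,1]] has finite index. -/
open Matrix

namespace St14

abbrev SL2 := Matrix.SpecialLinearGroup (Fin 2) ℤ

def A : SL2 := ⟨!![1, 2; 0, 1], by norm_num [Matrix.det_fin_two_of]⟩
def B : SL2 := ⟨!![1, 0; 2, 1], by norm_num [Matrix.det_fin_two_of]⟩
def Ai : SL2 := ⟨!![1, -2; 0, 1], by norm_num [Matrix.det_fin_two_of]⟩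
def Bi : SL2 := ⟨!![1, 0; -2, 1], by norm_num [Matrix.det_fin_two_of]⟩
def W : SL2 := ⟨!![-1, -2; 2, 3], by norm_num [Matrix.det_fin_two_of]⟩
def Wi : SL2 := ⟨!![3, 2; -2, -1], by norm_num [Matrix.det_fin_two_of]⟩
def V : SL2 := ⟨!![3, -2; 2, -1], by norm_num [Matrix.det_fin_two_of]⟩
def Vi : SL2 := ⟨!![-1, 2; -2, 3], by norm_num [Matrix.det_fin_two_of]⟩

def K : Subgroup SL2 :=
  (Subgroup.closure {QuotientGroup.mk' (Subgroup.center SL2) A,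
      QuotientGroup.mk' (Subgroup.center SL2) B}).comap
    (QuotientGroup.mk' (Subgroup.center SL2))

lemma sl2_ext {g h : SL2} (H : (g : Matrix (Fin 2) (Fin 2) ℤ) = h) : g = h := Subtype.ext H

lemma mulmat (g h : SL2) : ((g * h : SL2) : Matrix (Fin 2) (Fin 2) ℤ)
    = (g : Matrix (Fin 2) (Fin 2) ℤ) * h := rfl

lemma hA : A ∈ K := Subgroup.subset_closure (Set.mem_insert _ _)
lemma hB : B ∈ K := Subgroup.subset_closure (Set.mem_insert_of_mem _ rfl)

lemma hneg : (-1 : SL2) ∈ K := by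
  have h : (-1 : SL2) ∈ Subgroup.center SL2 := by
    rw [Subgroup.mem_center_iff]
    intro g
    simp
  rw [K, Subgroup.mem_comap]
  rw [show QuotientGroup.mk' (Subgroup.center SL2) (-1) = 1 from
    (QuotientGroup.eq_one_iff _).mpr h]
  exact one_mem _

lemma hAi : Ai ∈ K := by
  have h : A * Ai = 1 := by
    apply sl2_ext
    rw [mulmat]
    norm_num [A, Ai, Matrix.mul_fin_two]
    exact Matrix.one_fin_two.symm
  rw [show Ai = A⁻¹ from (inv_eq_of_mul_eq_one_right h).symm]
  exact inv_mem hA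

lemma hBi : Bi ∈ K := by
  have h : B * Bi = 1 := by
    apply sl2_ext
    rw [mulmat]
    norm_num [B, Bi, Matrix.mul_fin_two]
    exact Matrix.one_fin_two.symm
  rw [show Bi = B⁻¹ from (inv_eq_of_mul_eq_one_right h).symm]
  exact inv_mem hB

lemma hW : W ∈ K := by
  have h : W = Bi * A * (-1) := by
    apply sl2_ext
    rw [mulmat, mulmat]
    norm_num [W, Bi, A, Matrix.mul_fin_two]
  rw [h]; exact mul_mem (mul_mem hBi hA) hneg

lemma hV : V ∈ K := by
  have h : V = A * Bi * (-1) := by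
    apply sl2_ext
    rw [mulmat, mulmat]
    norm_num [V, Bi, A, Matrix.mul_fin_two]
  rw [h]; exact mul_mem (mul_mem hA hBi) hneg

lemma hWi : Wi ∈ K := by
  have h : W * Wi = 1 := by
    apply sl2_ext
    rw [mulmat]
    norm_num [W, Wi, Matrix.mul_fin_two]
    exact Matrix.one_fin_two.symm
  rw [show Wi = W⁻¹ from (inv_eq_of_mul_eq_one_right h).symm]
  exact inv_mem hW

lemma hVi : Vi ∈ K := by
  have h : V * Vi = 1 := by
    apply sl2_ext
    rw [mulmat]
    norm_num [V, Vi, Matrix.mul_fin_two]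
    exact Matrix.one_fin_two.symm
  rw [show Vi = V⁻¹ from (inv_eq_of_mul_eq_one_right h).symm]
  exact inv_mem hV

def rep : Fin 8 → SL2 :=
  ![1,
    ⟨!![1, 0; 1, 1], by norm_num [Matrix.det_fin_two_of]⟩,
    ⟨!![0, -1; 1, 0], by norm_num [Matrix.det_fin_two_of]⟩,
    ⟨!![0, -1; 1, 1], by norm_num [Matrix.det_fin_two_of]⟩,
    ⟨!![1, 1; 0, 1], by norm_num [Matrix.det_fin_two_of]⟩,
    ⟨!![1, 1; 1, 2], by norm_num [Matrix.det_fin_two_of]⟩,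
    ⟨!![1, -1; 0, 1], by norm_num [Matrix.det_fin_two_of]⟩,
    ⟨!![1, -1; 1, 0], by norm_num [Matrix.det_fin_two_of]⟩]

def P (g : SL2) : Prop := ∃ i : Fin 8, (rep i)⁻¹ * g ∈ K

lemma P_of_eq_rep {g : SL2} (i : Fin 8) (h : g = rep i) : P g :=
  ⟨i, by rw [h, inv_mul_cancel]; exact one_mem _⟩

lemma P_mul_iff {g h : SL2} (hh : h ∈ K) : P (g * h) ↔ P g := by
  constructor
  · rintro ⟨i, m⟩
    exact ⟨i, by simpa [mul_assoc] using mul_mem m (inv_mem hh)⟩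
  · rintro ⟨i, m⟩
    exact ⟨i, by simpa [mul_assoc] using mul_mem m hh⟩

lemma P_neg {g : SL2} : P (-g) ↔ P g := by
  rw [show -g = g * (-1) by rw [mul_neg_one]]
  exact P_mul_iff hneg

lemma base10 : ∀ (n : ℕ) (c : ℤ), (2*c - 1).natAbs = n →
    ∀ g : SL2, (g : Matrix (Fin 2) (Fin 2) ℤ) = !![1, 0; c, 1] → P g := by
  intro n
  induction n using Nat.strong_induction_on with
  | _ n ih =>
  intro c hc g hg
  rcases lt_trichotomy c 0 with h0 | h0 | h0
  · -- c ≤ -1 : pass to g * B with parameter c + 2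
    have hmul : ((g * B : SL2) : Matrix (Fin 2) (Fin 2) ℤ) = !![1, 0; c + 2, 1] := by
      rw [mulmat, hg]
      ext i j
      fin_cases i <;> fin_cases j <;> simp [B, Matrix.mul_apply, Fin.sum_univ_two]
    exact (P_mul_iff hB).mp
      (ih ((2*(c+2) - 1).natAbs) (by omega) (c+2) rfl (g * B) hmul)
  · exact P_of_eq_rep 0 (sl2_ext (by rw [hg, h0]; simp [rep, Matrix.one_fin_two]))
  · by_cases h1 : c = 1
    · exact P_of_eq_rep 1 (sl2_ext (by rw [hg, h1]; rfl))
    · -- c ≥ 2 : pass to g * Bi with parameter c - 2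
      have hmul : ((g * Bi : SL2) : Matrix (Fin 2) (Fin 2) ℤ) = !![1, 0; c - 2, 1] := by
        rw [mulmat, hg]
        ext i j
        fin_cases i <;> fin_cases j <;> simp [Bi, Matrix.mul_apply, Fin.sum_univ_two] <;> ring
      exact (P_mul_iff hBi).mp
        (ih ((2*(c-2) - 1).natAbs) (by omega) (c-2) rfl (g * Bi) hmul)

lemma base0 : ∀ (n : ℕ) (d : ℤ), (2*d - 1).natAbs = n →
    ∀ g : SL2, (g : Matrix (Fin 2) (Fin 2) ℤ) = !![0, -1; 1, d] → P g := by
  intro n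
  induction n using Nat.strong_induction_on with
  | _ n ih =>
  intro d hd g hg
  rcases lt_trichotomy d 0 with h0 | h0 | h0
  · have hmul : ((g * A : SL2) : Matrix (Fin 2) (Fin 2) ℤ) = !![0, -1; 1, d + 2] := by
      rw [mulmat, hg]
      ext i j
      fin_cases i <;> fin_cases j <;> simp [A, Matrix.mul_apply, Fin.sum_univ_two] <;> ring
    exact (P_mul_iff hA).mp
      (ih ((2*(d+2) - 1).natAbs) (by omega) (d+2) rfl (g * A) hmul)
  · exact P_of_eq_rep 2 (sl2_ext (by rw [hg, h0]; rfl))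
  · by_cases h1 : d = 1
    · exact P_of_eq_rep 3 (sl2_ext (by rw [hg, h1]; rfl))
    · have hmul : ((g * Ai : SL2) : Matrix (Fin 2) (Fin 2) ℤ) = !![0, -1; 1, d - 2] := by
        rw [mulmat, hg]
        ext i j
        fin_cases i <;> fin_cases j <;> simp [Ai, Matrix.mul_apply, Fin.sum_univ_two] <;> ring
      exact (P_mul_iff hAi).mp
        (ih ((2*(d-2) - 1).natAbs) (by omega) (d-2) rfl (g * Ai) hmul)

lemma base11 : ∀ (n : ℕ) (c : ℤ), (2*c - 1).natAbs = n →
    ∀ g : SL2, (g : Matrix (Fin 2) (Fin 2) ℤ) = !![1, 1; c, c + 1] → P g := by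
  intro n
  induction n using Nat.strong_induction_on with
  | _ n ih =>
  intro c hc g hg
  rcases lt_trichotomy c 0 with h0 | h0 | h0
  · have hmul : ((g * W : SL2) : Matrix (Fin 2) (Fin 2) ℤ) = !![1, 1; c + 2, (c + 2) + 1] := by
      rw [mulmat, hg]
      ext i j
      fin_cases i <;> fin_cases j <;> simp [W, Matrix.mul_apply, Fin.sum_univ_two] <;> ring
    exact (P_mul_iff hW).mp
      (ih ((2*(c+2) - 1).natAbs) (by omega) (c+2) rfl (g * W) hmul)
  · exact P_of_eq_rep 4 (sl2_ext (by rw [hg, h0]; norm_num; rfl))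
  · by_cases h1 : c = 1
    · exact P_of_eq_rep 5 (sl2_ext (by rw [hg, h1]; norm_num; rfl))
    · have hmul : ((g * Wi : SL2) : Matrix (Fin 2) (Fin 2) ℤ) = !![1, 1; c - 2, (c - 2) + 1] := by
        rw [mulmat, hg]
        ext i j
        fin_cases i <;> fin_cases j <;> simp [Wi, Matrix.mul_apply, Fin.sum_univ_two] <;> ring
      exact (P_mul_iff hWi).mp
        (ih ((2*(c-2) - 1).natAbs) (by omega) (c-2) rfl (g * Wi) hmul)

lemma base1m1 : ∀ (n : ℕ) (c : ℤ), (2*c - 1).natAbs = n →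
    ∀ g : SL2, (g : Matrix (Fin 2) (Fin 2) ℤ) = !![1, -1; c, 1 - c] → P g := by
  intro n
  induction n using Nat.strong_induction_on with
  | _ n ih =>
  intro c hc g hg
  rcases lt_trichotomy c 0 with h0 | h0 | h0
  · have hmul : ((g * V : SL2) : Matrix (Fin 2) (Fin 2) ℤ) = !![1, -1; c + 2, 1 - (c + 2)] := by
      rw [mulmat, hg]
      ext i j
      fin_cases i <;> fin_cases j <;> simp [V, Matrix.mul_apply, Fin.sum_univ_two] <;> ring
    exact (P_mul_iff hV).mp
      (ih ((2*(c+2) - 1).natAbs) (by omega) (c+2) rfl (g * V) hmul)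
  · exact P_of_eq_rep 6 (sl2_ext (by rw [hg, h0]; norm_num; rfl))
  · by_cases h1 : c = 1
    · exact P_of_eq_rep 7 (sl2_ext (by rw [hg, h1]; norm_num; rfl))
    · have hmul : ((g * Vi : SL2) : Matrix (Fin 2) (Fin 2) ℤ) = !![1, -1; c - 2, 1 - (c - 2)] := by
        rw [mulmat, hg]
        ext i j
        fin_cases i <;> fin_cases j <;> simp [Vi, Matrix.mul_apply, Fin.sum_univ_two] <;> ring
      exact (P_mul_iff hVi).mp
        (ih ((2*(c-2) - 1).natAbs) (by omega) (c-2) rfl (g * Vi) hmul)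

lemma negmat (g : SL2) (a b c d : ℤ)
    (hg : (g : Matrix (Fin 2) (Fin 2) ℤ) = !![a, b; c, d]) :
    ((-g : SL2) : Matrix (Fin 2) (Fin 2) ℤ) = !![-a, -b; -c, -d] := by
  rw [Matrix.SpecialLinearGroup.coe_neg, hg]
  ext i j
  fin_cases i <;> fin_cases j <;> simp

lemma key : ∀ (n : ℕ) (g : SL2),
    ((g : Matrix (Fin 2) (Fin 2) ℤ) 0 0).natAbs + ((g : Matrix (Fin 2) (Fin 2) ℤ) 0 1).natAbs = n
    → P g := by
  intro n
  induction n using Nat.strong_induction_on with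
  | _ n ih =>
  intro g hn
  set M := (g : Matrix (Fin 2) (Fin 2) ℤ) with hM
  have hg : (g : Matrix (Fin 2) (Fin 2) ℤ) = !![M 0 0, M 0 1; M 1 0, M 1 1] :=
    Matrix.eta_fin_two M
  set a := M 0 0 with ha'
  set b := M 0 1 with hb'
  set c := M 1 0 with hc'
  set d := M 1 1 with hd'
  have hdet : a * d - b * c = 1 := by
    have h2 := g.2
    rw [Matrix.det_fin_two] at h2
    exact h2
  by_cases hb : b = 0
  · -- b = 0 : a * d = 1
    have had : a * d = 1 := by rw [hb] at hdet; linarith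
    rcases Int.eq_one_or_neg_one_of_mul_eq_one' had with ⟨ha1, hd1⟩ | ⟨ha1, hd1⟩
    · exact base10 _ c rfl g (by rw [hg, ha1, hb, hd1])
    · refine P_neg.mp (base10 _ (-c) rfl (-g) ?_)
      rw [negmat g a b c d hg]
      ext i j
      fin_cases i <;> fin_cases j <;> simp [ha1, hb, hd1]
  · by_cases ha : a = 0
    · -- a = 0 : b * c = -1
      have hbc : b * c = -1 := by rw [ha] at hdet; linarith
      have : b * (-c) = 1 := by linarith [hbc]
      rcases Int.eq_one_or_neg_one_of_mul_eq_one' this with ⟨hb1, hc1⟩ | ⟨hb1, hc1⟩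
      · -- b = 1, c = -1 : use -g
        refine P_neg.mp (base0 _ (-d) rfl (-g) ?_)
        rw [negmat g a b c d hg]
        ext i j
        fin_cases i <;> fin_cases j <;> simp [ha, hb1, show c = -1 by omega]
      · exact base0 _ d rfl g (by rw [hg, ha, hb1, show c = 1 by omega])
    · rcases lt_trichotomy a.natAbs b.natAbs with hab | hab | hab
      · -- |a| < |b| : reduce b via A or Ai
        rcases (show a ≠ 0 from ha).lt_or_gt with h1 | h1 <;>
          rcases (show b ≠ 0 from hb).lt_or_gt with h2 | h2
        · -- a < 0, b < 0 : use Ai (b → b - 2a)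
          have hmul : ((g * Ai : SL2) : Matrix (Fin 2) (Fin 2) ℤ) = !![a, b - 2*a; c, d - 2*c] := by
            rw [mulmat, hg]; ext i j
            fin_cases i <;> fin_cases j <;>
              simp [Ai, Matrix.mul_apply, Fin.sum_univ_two] <;> ring
          refine (P_mul_iff hAi).mp
            (ih (a.natAbs + (b - 2*a).natAbs) (by omega) (g * Ai) (by rw [hmul]; simp))
        · -- a < 0, b > 0 : use A (b → b + 2a)
          have hmul : ((g * A : SL2) : Matrix (Fin 2) (Fin 2) ℤ) = !![a, b + 2*a; c, d + 2*c] := by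
            rw [mulmat, hg]; ext i j
            fin_cases i <;> fin_cases j <;>
              simp [A, Matrix.mul_apply, Fin.sum_univ_two] <;> ring
          refine (P_mul_iff hA).mp
            (ih (a.natAbs + (b + 2*a).natAbs) (by omega) (g * A) (by rw [hmul]; simp))
        · -- a > 0, b < 0 : use A
          have hmul : ((g * A : SL2) : Matrix (Fin 2) (Fin 2) ℤ) = !![a, b + 2*a; c, d + 2*c] := by
            rw [mulmat, hg]; ext i j
            fin_cases i <;> fin_cases j <;>
              simp [A, Matrix.mul_apply, Fin.sum_univ_two] <;> ring
          refine (P_mul_iff hA).mp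
            (ih (a.natAbs + (b + 2*a).natAbs) (by omega) (g * A) (by rw [hmul]; simp))
        · -- a > 0, b > 0 : use Ai
          have hmul : ((g * Ai : SL2) : Matrix (Fin 2) (Fin 2) ℤ) = !![a, b - 2*a; c, d - 2*c] := by
            rw [mulmat, hg]; ext i j
            fin_cases i <;> fin_cases j <;>
              simp [Ai, Matrix.mul_apply, Fin.sum_univ_two] <;> ring
          refine (P_mul_iff hAi).mp
            (ih (a.natAbs + (b - 2*a).natAbs) (by omega) (g * Ai) (by rw [hmul]; simp))
      · -- |a| = |b| : both are ±1
        rcases Int.natAbs_eq_natAbs_iff.mp hab with hba | hba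
        · -- a = b
          have hsub : a * (d - c) = 1 := by linear_combination hdet - c * hba
          rcases Int.eq_one_or_neg_one_of_mul_eq_one' hsub with ⟨ha1, hdc⟩ | ⟨ha1, hdc⟩
          · exact base11 _ c rfl g
              (by rw [hg, ha1, show b = 1 by omega, show d = c + 1 by omega])
          · refine P_neg.mp (base11 _ (-c) rfl (-g) ?_)
            rw [negmat g a b c d hg]
            ext i j
            fin_cases i <;> fin_cases j <;>
              simp [ha1, show b = -1 by omega, show d = c - 1 by omega] <;> ring
        · -- a = -b
          have hsub : a * (d + c) = 1 := by linear_combination hdet + c * hba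
          rcases Int.eq_one_or_neg_one_of_mul_eq_one' hsub with ⟨ha1, hdc⟩ | ⟨ha1, hdc⟩
          · exact base1m1 _ c rfl g
              (by rw [hg, ha1, show b = -1 by omega, show d = 1 - c by omega])
          · refine P_neg.mp (base1m1 _ (-c) rfl (-g) ?_)
            rw [negmat g a b c d hg]
            ext i j
            fin_cases i <;> fin_cases j <;>
              simp [ha1, show b = 1 by omega, show d = -1 - c by omega] <;> ring
      · -- |b| < |a| : reduce a via B or Bi
        rcases (show a ≠ 0 from ha).lt_or_gt with h1 | h1 <;>
          rcases (show b ≠ 0 from hb).lt_or_gt with h2 | h2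
        · -- a < 0, b < 0 : use Bi (a → a - 2b)
          have hmul : ((g * Bi : SL2) : Matrix (Fin 2) (Fin 2) ℤ) = !![a - 2*b, b; c - 2*d, d] := by
            rw [mulmat, hg]; ext i j
            fin_cases i <;> fin_cases j <;>
              simp [Bi, Matrix.mul_apply, Fin.sum_univ_two] <;> ring
          refine (P_mul_iff hBi).mp
            (ih ((a - 2*b).natAbs + b.natAbs) (by omega) (g * Bi) (by rw [hmul]; simp))
        · -- a < 0, b > 0 : use B (a → a + 2b)
          have hmul : ((g * B : SL2) : Matrix (Fin 2) (Fin 2) ℤ) = !![a + 2*b, b; c + 2*d, d] := by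
            rw [mulmat, hg]; ext i j
            fin_cases i <;> fin_cases j <;>
              simp [B, Matrix.mul_apply, Fin.sum_univ_two] <;> ring
          refine (P_mul_iff hB).mp
            (ih ((a + 2*b).natAbs + b.natAbs) (by omega) (g * B) (by rw [hmul]; simp))
        · -- a > 0, b < 0 : use B
          have hmul : ((g * B : SL2) : Matrix (Fin 2) (Fin 2) ℤ) = !![a + 2*b, b; c + 2*d, d] := by
            rw [mulmat, hg]; ext i j
            fin_cases i <;> fin_cases j <;>
              simp [B, Matrix.mul_apply, Fin.sum_univ_two] <;> ring
          refine (P_mul_iff hB).mp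
            (ih ((a + 2*b).natAbs + b.natAbs) (by omega) (g * B) (by rw [hmul]; simp))
        · -- a > 0, b > 0 : use Bi
          have hmul : ((g * Bi : SL2) : Matrix (Fin 2) (Fin 2) ℤ) = !![a - 2*b, b; c - 2*d, d] := by
            rw [mulmat, hg]; ext i j
            fin_cases i <;> fin_cases j <;>
              simp [Bi, Matrix.mul_apply, Fin.sum_univ_two] <;> ring
          refine (P_mul_iff hBi).mp
            (ih ((a - 2*b).natAbs + b.natAbs) (by omega) (g * Bi) (by rw [hmul]; simp))

lemma finiteIndexK : K.FiniteIndex := by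
  have hfin : Finite (SL2 ⧸ K) := by
    refine Finite.of_surjective (fun i : Fin 8 => ((rep i : SL2) : SL2 ⧸ K)) ?_
    intro x
    induction x using QuotientGroup.induction_on with
    | H g =>
      obtain ⟨i, hi⟩ := key _ g rfl
      exact ⟨i, QuotientGroup.eq.mpr hi⟩
  exact @Subgroup.finiteIndex_of_finite_quotient _ _ K hfin

end St14

/-- In `PSL(2, ℤ) = SL(2, ℤ)/{±I}` (the quotient of `SL(2, ℤ)` by its
center), the subgroup generated by the images of `[[1,2],[0,1]]` and `[[1,0],[2,1]]`
has finite index. -/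
theorem statement14 :
    (Subgroup.closure
      {QuotientGroup.mk' (Subgroup.center (Matrix.SpecialLinearGroup (Fin 2) ℤ))
        ⟨!![1, 2; 0, 1], by norm_num [Matrix.det_fin_two_of]⟩,
       QuotientGroup.mk' (Subgroup.center (Matrix.SpecialLinearGroup (Fin 2) ℤ))
        ⟨!![1, 0; 2, 1], by norm_num [Matrix.det_fin_two_of]⟩} :
      Subgroup (Matrix.SpecialLinearGroup (Fin 2) ℤ ⧸
        Subgroup.center (Matrix.SpecialLinearGroup (Fin 2) ℤ))).FiniteIndex := by
  constructor
  have hK : St14.K = (Subgroup.closure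
      {QuotientGroup.mk' (Subgroup.center (Matrix.SpecialLinearGroup (Fin 2) ℤ))
        ⟨!![1, 2; 0, 1], by norm_num [Matrix.det_fin_two_of]⟩,
       QuotientGroup.mk' (Subgroup.center (Matrix.SpecialLinearGroup (Fin 2) ℤ))
        ⟨!![1, 0; 2, 1], by norm_num [Matrix.det_fin_two_of]⟩}).comap
      (QuotientGroup.mk' (Subgroup.center (Matrix.SpecialLinearGroup (Fin 2) ℤ))) := rfl
  have h2 := Subgroup.index_comap_of_surjective (Subgroup.closure
      {QuotientGroup.mk' (Subgroup.center (Matrix.SpecialLinearGroup (Fin 2) ℤ))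
        ⟨!![1, 2; 0, 1], by norm_num [Matrix.det_fin_two_of]⟩,
       QuotientGroup.mk' (Subgroup.center (Matrix.SpecialLinearGroup (Fin 2) ℤ))
        ⟨!![1, 0; 2, 1], by norm_num [Matrix.det_fin_two_of]⟩})
      (QuotientGroup.mk'_surjective (Subgroup.center (Matrix.SpecialLinearGroup (Fin 2) ℤ)))
  rw [← h2, ← hK]
  exact St14.finiteIndexK.index_ne_zero
end
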